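/- arXiv:1510.00481 — 4 statements merged into one kernel-verified Lean document; each statement's English description precedes it below -/
import Mathlib

section
/- For every positive integer n, one has (∑_{d ∣ n} ψ(d)) · φ(n)² ≤ n³, where φ is Euler's totient function. -/
open scoped BigOperators

/-- The Dedekind psi function: `ψ(n) = n · ∏_{p prime, p ∣ n} (1 + 1/p)`. -/
noncomputable def dedekindPsi (n : ℕ) : ℝ :=
  n * ∏ p ∈ n.primeFactors, (1 + 1 / (p : ℝ))


lemma tot_real (m : ℕ) :
    (m.totient : ℝ) = m * ∏ p ∈ m.primeFactors, (1 - 1 / (p : ℝ)) := by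
  have h := Nat.totient_eq_mul_prod_factors m
  have := congrArg (fun q : ℚ => (q : ℝ)) h
  push_cast at this
  simpa [one_div] using this

lemma factor_mem {m p : ℕ} (hp : p ∈ m.primeFactors) :
    0 ≤ 1 - 1 / (p : ℝ) ∧ 1 - 1 / (p : ℝ) ≤ 1 := by
  have h2 : (2:ℝ) ≤ p := by exact_mod_cast (Nat.Prime.two_le (Nat.prime_of_mem_primeFactors hp))
  have hp0 : (0:ℝ) < p := by linarith
  constructor
  · have : 1 / (p:ℝ) ≤ 1 := by rw [div_le_one hp0]; linarith
    linarith
  · have : 0 ≤ 1 / (p:ℝ) := by positivity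
    linarith

lemma prod_mono_dvd {d n : ℕ} (hd : d ∣ n) (hn : n ≠ 0) :
    ∏ p ∈ n.primeFactors, (1 - 1 / (p : ℝ)) ≤ ∏ p ∈ d.primeFactors, (1 - 1 / (p : ℝ)) := by
  have hsub := Nat.primeFactors_mono hd hn
  rw [← Finset.prod_sdiff hsub]
  have h1 : ∏ p ∈ n.primeFactors \ d.primeFactors, (1 - 1 / (p : ℝ)) ≤ 1 :=
    Finset.prod_le_one (fun p hp => (factor_mem (Finset.mem_sdiff.mp hp).1).1)
      (fun p hp => (factor_mem (Finset.mem_sdiff.mp hp).1).2)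
  have h2 : (0:ℝ) ≤ ∏ p ∈ d.primeFactors, (1 - 1 / (p : ℝ)) :=
    Finset.prod_nonneg (fun p hp => (factor_mem hp).1)
  nlinarith

lemma totient_sub_mult {d n : ℕ} (hd : d ∣ n) (hn : n ≠ 0) :
    (n.totient : ℝ) * d ≤ (d.totient : ℝ) * n := by
  rw [tot_real n, tot_real d]
  have h := prod_mono_dvd hd hn
  have hn0 : (0:ℝ) ≤ n := by positivity
  have hd0 : (0:ℝ) ≤ d := by positivity
  nlinarith [mul_nonneg hn0 hd0]

lemma totient_sub_mult_nat {d n : ℕ} (hd : d ∣ n) (hn : n ≠ 0) :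
    n.totient * d ≤ d.totient * n := by
  have := totient_sub_mult hd hn
  exact_mod_cast this

lemma sigma_mul_totient_le (n : ℕ) (hn : 0 < n) :
    (∑ d ∈ n.divisors, d) * n.totient ≤ n ^ 2 := by
  rw [Finset.sum_mul]
  have h1 : ∑ d ∈ n.divisors, (n / d) * n.totient = ∑ d ∈ n.divisors, d * n.totient :=
    Nat.sum_div_divisors n (fun d => d * n.totient)
  rw [← h1]
  have h2 : ∑ d ∈ n.divisors, (n / d) * n.totient ≤ ∑ d ∈ n.divisors, n * (n / d).totient := by
    apply Finset.sum_le_sum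
    intro d hd
    have hdvd : n / d ∣ n := Nat.div_dvd_of_dvd (Nat.dvd_of_mem_divisors hd)
    have := totient_sub_mult_nat hdvd hn.ne'
    calc n / d * n.totient = n.totient * (n / d) := Nat.mul_comm _ _
      _ ≤ (n / d).totient * n := this
      _ = n * (n / d).totient := Nat.mul_comm _ _
  refine h2.trans ?_
  rw [← Finset.mul_sum, Nat.sum_div_divisors n Nat.totient, Nat.sum_totient, sq]

lemma psi_term_bound {d n : ℕ} (hd : d ∣ n) (hn : 0 < n) :
    dedekindPsi d * (n.totient : ℝ) ^ 2 ≤ (d : ℝ) * ((n : ℝ) * n.totient) := by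
  set Qd := ∏ p ∈ d.primeFactors, (1 + 1 / (p : ℝ)) with hQd
  set Pd := ∏ p ∈ d.primeFactors, (1 - 1 / (p : ℝ)) with hPd
  set Pn := ∏ p ∈ n.primeFactors, (1 - 1 / (p : ℝ)) with hPn
  have hQdPd : Qd * Pd ≤ 1 := by
    rw [hQd, hPd, ← Finset.prod_mul_distrib]
    apply Finset.prod_le_one
    · intro p hp
      have h2 : (2:ℝ) ≤ p := by
        exact_mod_cast (Nat.Prime.two_le (Nat.prime_of_mem_primeFactors hp))
      have hp0 : (0:ℝ) < p := by linarith
      have h1 : 1 / (p:ℝ) ≤ 1 := by rw [div_le_one hp0]; linarith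
      have h0 : (0:ℝ) ≤ 1 / p := by positivity
      nlinarith
    · intro p hp
      have h0 : (0:ℝ) ≤ 1 / p := by positivity
      nlinarith
  have hQ0 : (0:ℝ) ≤ Qd := Finset.prod_nonneg fun p hp => by positivity
  have hPn0 : (0:ℝ) ≤ Pn := Finset.prod_nonneg fun p hp => (factor_mem hp).1
  have hmono : Pn ≤ Pd := prod_mono_dvd hd hn.ne'
  have hc : Qd * Pn ≤ 1 := le_trans (mul_le_mul_of_nonneg_left hmono hQ0) hQdPd
  have hphi : (n.totient : ℝ) = n * Pn := tot_real n
  have hd0 : (0:ℝ) ≤ d := by positivity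
  have hn0 : (0:ℝ) ≤ n := by positivity
  have ht : (0:ℝ) ≤ d * n ^ 2 * Pn := by positivity
  rw [dedekindPsi, ← hQd, hphi]
  nlinarith [mul_le_mul_of_nonneg_left hc ht]

theorem sum_psi_divisors_mul_totient_sq_le (n : ℕ) (hn : 0 < n) :
    (∑ d ∈ n.divisors, dedekindPsi d) * (n.totient : ℝ) ^ 2 ≤ (n : ℝ) ^ 3 := by
  rw [Finset.sum_mul]
  have h1 : ∑ d ∈ n.divisors, dedekindPsi d * (n.totient : ℝ) ^ 2
      ≤ ∑ d ∈ n.divisors, (d : ℝ) * ((n : ℝ) * n.totient) := by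
    apply Finset.sum_le_sum
    intro d hd
    exact psi_term_bound (Nat.dvd_of_mem_divisors hd) hn
  refine h1.trans ?_
  rw [← Finset.sum_mul]
  have h2 : ((∑ d ∈ n.divisors, d : ℕ) : ℝ) * n.totient ≤ (n : ℝ) ^ 2 := by
    exact_mod_cast sigma_mul_totient_le n hn
  have hn0 : (0:ℝ) ≤ n := by positivity
  have hcast : (∑ d ∈ n.divisors, (d : ℝ)) = ((∑ d ∈ n.divisors, d : ℕ) : ℝ) := by push_cast; ring
  rw [hcast]
  nlinarith [show (0:ℝ) ≤ (n.totient:ℝ) from Nat.cast_nonneg _, h2]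
end

section
/- There is a constant K such that for every real number x ≥ 2, |∑_{n ≤ x} ψ(n) − (15/(2π²)) · x²| ≤ K · x · log x, where the sum is over positive integers n ≤ x and log denotes the natural logarithm. -/
open scoped BigOperators

open Finset

noncomputable def sqf (n : ℕ) : ℝ := if Squarefree n then 1 else 0

lemma hasSum_convolution {a b : ℕ → ℝ} (ha0 : a 0 = 0) (hb0 : b 0 = 0)
    (ha : Summable fun n => ‖a n‖) (hb : Summable fun n => ‖b n‖) :
    HasSum (fun n : ℕ => ∑ p ∈ n.divisorsAntidiagonal, a p.1 * b p.2)
      ((∑' n, a n) * (∑' n, b n)) := by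
  have hsum : Summable fun x : ℕ × ℕ => a x.1 * b x.2 :=
    summable_mul_of_summable_norm ha hb
  have H := (ha.of_norm.hasSum.mul hb.of_norm.hasSum hsum).tsum_fiberwise
    (fun p : ℕ × ℕ => p.1 * p.2)
  have key : ∀ n : ℕ, (∑' (p : (fun p : ℕ × ℕ => p.1 * p.2) ⁻¹' {n}),
      a p.val.1 * b p.val.2) = ∑ p ∈ n.divisorsAntidiagonal, a p.1 * b p.2 := by
    intro n
    rcases eq_or_ne n 0 with rfl | hn
    · have : ∀ p : (fun p : ℕ × ℕ => p.1 * p.2) ⁻¹' {0}, a p.val.1 * b p.val.2 = 0 := by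
        rintro ⟨⟨p₁, p₂⟩, hp⟩
        rcases Nat.mul_eq_zero.mp (Set.mem_singleton_iff.mp hp) with rfl | rfl
        · simp [ha0]
        · simp [hb0]
      simp [funext this]
    · rw [show (fun p : ℕ × ℕ => p.1 * p.2) ⁻¹' {n} = ↑n.divisorsAntidiagonal by
        ext p; simp [Nat.mem_divisorsAntidiagonal, hn, eq_comm],
        Finset.tsum_subtype' n.divisorsAntidiagonal fun p => a p.1 * b p.2]
  simpa only [key] using H

noncomputable def sqind (n : ℕ) : ℝ := if IsSquare n then 1 else 0

lemma sqf_decomp_unique {a₁ c₁ a₂ c₂ : ℕ} (h₁ : Squarefree a₁) (h₂ : Squarefree a₂)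
    (hc₁ : IsSquare c₁) (hc₂ : IsSquare c₂) (he : a₁ * c₁ = a₂ * c₂) (hne : a₁ * c₁ ≠ 0) :
    a₁ = a₂ ∧ c₁ = c₂ := by
  obtain ⟨b₁, rfl⟩ := hc₁
  obtain ⟨b₂, rfl⟩ := hc₂
  have ha₁ : a₁ ≠ 0 := by rintro rfl; exact hne (by simp)
  have hb₁ : b₁ ≠ 0 := by rintro rfl; exact hne (by simp)
  have hne' : a₂ * (b₂ * b₂) ≠ 0 := he ▸ hne
  have ha₂ : a₂ ≠ 0 := by rintro rfl; exact hne' (by simp)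
  have hb₂ : b₂ ≠ 0 := by rintro rfl; exact hne' (by simp)
  have hfa : a₁ = a₂ := by
    have hfac : ∀ p : ℕ, a₁.factorization p = a₂.factorization p := by
      intro p
      have e1 : (a₁ * (b₁ * b₁)).factorization p = (a₂ * (b₂ * b₂)).factorization p := by
        rw [he]
      rw [Nat.factorization_mul ha₁ (mul_ne_zero hb₁ hb₁),
        Nat.factorization_mul hb₁ hb₁,
        Nat.factorization_mul ha₂ (mul_ne_zero hb₂ hb₂),
        Nat.factorization_mul hb₂ hb₂] at e1
      simp only [Finsupp.add_apply] at e1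
      have l₁ : a₁.factorization p ≤ 1 := h₁.natFactorization_le_one p
      have l₂ : a₂.factorization p ≤ 1 := h₂.natFactorization_le_one p
      omega
    exact Nat.factorization_inj ha₁ ha₂ (Finsupp.ext hfac)
  refine ⟨hfa, ?_⟩
  subst hfa
  exact Nat.eq_of_mul_eq_mul_left (Nat.pos_of_ne_zero ha₁) he

lemma sum_sqf_sqind {n : ℕ} (hn : n ≠ 0) :
    ∑ p ∈ n.divisorsAntidiagonal, sqf p.1 * sqind p.2 = 1 := by
  obtain ⟨a, b, hab, hsq⟩ := Nat.sq_mul_squarefree n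
  have hmem : (a, b ^ 2) ∈ n.divisorsAntidiagonal := by
    rw [Nat.mem_divisorsAntidiagonal]
    constructor
    · rw [← hab]; ring
    · exact hn
  have hbsq : IsSquare (b ^ 2) := ⟨b, by rw [pow_two]⟩
  rw [Finset.sum_eq_single_of_mem _ hmem]
  · simp [sqf, sqind, hsq, hbsq]
  · rintro ⟨d, e⟩ hp hne
    rw [Nat.mem_divisorsAntidiagonal] at hp
    by_cases hd : Squarefree d
    · by_cases he : IsSquare e
      · exfalso
        have heq : d * e = a * b ^ 2 := by
          rw [hp.1, ← hab]; ring
        have := sqf_decomp_unique hd hsq he hbsq heq (hp.1 ▸ hp.2)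
        exact hne (by simp [Prod.ext_iff, this.1, this.2])
      · simp [sqind, he]
    · simp [sqf, hd]

lemma sqf_nonneg (d : ℕ) : 0 ≤ sqf d := by unfold sqf; positivity

lemma sqf_le_one (d : ℕ) : sqf d ≤ 1 := by
  unfold sqf; split <;> norm_num

lemma summable_one_div_sq : Summable (fun d : ℕ => 1 / (d : ℝ) ^ 2) :=
  Real.summable_one_div_nat_pow.mpr one_lt_two

lemma summable_sqf : Summable (fun d : ℕ => ‖sqf d / (d : ℝ) ^ 2‖) := by
  apply Summable.of_nonneg_of_le (f := fun d : ℕ => 1 / (d : ℝ) ^ 2)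
    (fun d => norm_nonneg _) (fun d => ?_) summable_one_div_sq
  rcases Nat.eq_zero_or_pos d with rfl | hd
  · simp
  · rw [norm_div, Real.norm_eq_abs, Real.norm_eq_abs, abs_of_nonneg (sqf_nonneg d),
      abs_of_nonneg (by positivity)]
    exact div_le_div₀ zero_le_one (sqf_le_one d) (by positivity) le_rfl

noncomputable def sqindf (e : ℕ) : ℝ := sqind e / (e : ℝ) ^ 2

lemma sqind_nonneg (d : ℕ) : 0 ≤ sqind d := by unfold sqind; positivity

lemma sqind_le_one (d : ℕ) : sqind d ≤ 1 := by unfold sqind; split <;> norm_num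

lemma summable_sqind : Summable (fun d : ℕ => ‖sqind d / (d : ℝ) ^ 2‖) := by
  apply Summable.of_nonneg_of_le (f := fun d : ℕ => 1 / (d : ℝ) ^ 2)
    (fun d => norm_nonneg _) (fun d => ?_) summable_one_div_sq
  rcases Nat.eq_zero_or_pos d with rfl | hd
  · simp
  · rw [norm_div, Real.norm_eq_abs, Real.norm_eq_abs, abs_of_nonneg (sqind_nonneg d),
      abs_of_nonneg (by positivity)]
    exact div_le_div₀ zero_le_one (sqind_le_one d) (by positivity) le_rfl

open Real in
lemma hasSum_sqind : HasSum (fun e : ℕ => sqind e / (e : ℝ) ^ 2) (π ^ 4 / 90) := by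
  have hinj : Function.Injective (fun m : ℕ => m ^ 2) :=
    fun m n h => Nat.pow_left_injective (by norm_num) h
  rw [← Function.Injective.hasSum_iff hinj ?_]
  · have : ((fun e : ℕ => sqind e / (e : ℝ) ^ 2) ∘ fun m : ℕ => m ^ 2)
        = fun m : ℕ => 1 / (m : ℝ) ^ 4 := by
      funext m
      have hsq : IsSquare ((m ^ 2 : ℕ)) := ⟨m, pow_two m⟩
      simp only [Function.comp_apply, sqind, if_pos hsq]
      push_cast
      ring
    rw [this]
    exact hasSum_zeta_four
  · intro e he
    have : ¬ IsSquare e := by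
      rintro ⟨r, rfl⟩
      exact he ⟨r, by simp [pow_two]⟩
    simp [sqind, this]

open Real in
lemma hasSum_sqf : HasSum (fun d : ℕ => sqf d / (d : ℝ) ^ 2) (15 / π ^ 2) := by
  have hconv := hasSum_convolution (a := fun d : ℕ => sqf d / (d : ℝ) ^ 2)
    (b := fun e : ℕ => sqind e / (e : ℝ) ^ 2) (by simp) (by simp) summable_sqf summable_sqind
  have hfun : (fun n : ℕ => ∑ p ∈ n.divisorsAntidiagonal,
      (sqf p.1 / (p.1 : ℝ) ^ 2) * (sqind p.2 / (p.2 : ℝ) ^ 2))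
      = fun n : ℕ => 1 / (n : ℝ) ^ 2 := by
    funext n
    rcases eq_or_ne n 0 with rfl | hn
    · simp
    · have : ∀ p ∈ n.divisorsAntidiagonal,
          (sqf p.1 / (p.1 : ℝ) ^ 2) * (sqind p.2 / (p.2 : ℝ) ^ 2)
          = sqf p.1 * sqind p.2 / (n : ℝ) ^ 2 := by
        intro p hp
        have := (Nat.mem_divisorsAntidiagonal.mp hp).1
        rw [div_mul_div_comm, ← mul_pow, ← Nat.cast_mul, this]
      rw [Finset.sum_congr rfl this, ← Finset.sum_div, sum_sqf_sqind hn]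
  rw [hfun] at hconv
  have h2 := hasSum_zeta_two
  have heq : (∑' d : ℕ, sqf d / (d : ℝ) ^ 2) * (∑' e : ℕ, sqind e / (e : ℝ) ^ 2)
      = π ^ 2 / 6 := hconv.unique h2
  rw [hasSum_sqind.tsum_eq] at heq
  have hπ : (π : ℝ) ^ 4 / 90 ≠ 0 := by
    have := Real.pi_ne_zero
    positivity
  have hval : (∑' d : ℕ, sqf d / (d : ℝ) ^ 2) = 15 / π ^ 2 := by
    have hπ2 : (π : ℝ) ^ 2 ≠ 0 := pow_ne_zero 2 Real.pi_ne_zero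
    rw [eq_div_iff hπ2]
    have key : ((∑' d : ℕ, sqf d / (d : ℝ) ^ 2) * π ^ 2 * 6) * π ^ 2 = 90 * π ^ 2 := by
      linear_combination 540 * heq
    have key2 := mul_right_cancel₀ hπ2 key
    linarith
  exact hval ▸ summable_sqf.of_norm.hasSum

lemma dedekindPsi_eq {n : ℕ} (hn : n ≠ 0) :
    dedekindPsi n = ∑ d ∈ n.divisors, sqf d * ((n / d : ℕ) : ℝ) := by
  have h1 : ∑ d ∈ n.divisors, sqf d * ((n / d : ℕ) : ℝ)
      = ∑ d ∈ n.divisors with Squarefree d, ((n / d : ℕ) : ℝ) := by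
    rw [Finset.sum_filter]
    refine Finset.sum_congr rfl fun d _ => ?_
    by_cases h : Squarefree d <;> simp [sqf, h]
  rw [h1, Nat.sum_divisors_filter_squarefree hn]
  have h2 : (UniqueFactorizationMonoid.normalizedFactors n).toFinset = n.primeFactors := by
    rw [Nat.factors_eq]; rfl
  rw [h2]
  have h3 : ∏ p ∈ n.primeFactors, (1 + 1 / (p : ℝ))
      = ∑ t ∈ n.primeFactors.powerset, ∏ p ∈ t, (1 / (p : ℝ)) := by
    have : ∀ p ∈ n.primeFactors, (1 + 1 / (p : ℝ)) = (1 / (p : ℝ) + 1) := fun p _ => by ring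
    rw [Finset.prod_congr rfl this, Finset.prod_add]
    simp
  unfold dedekindPsi
  rw [h3, Finset.mul_sum]
  refine Finset.sum_congr rfl fun t ht => ?_
  have hsub := Finset.mem_powerset.mp ht
  have hdvd : t.val.prod ∣ n := by
    rw [Finset.prod_val]
    exact dvd_trans (Finset.prod_dvd_prod_of_subset t n.primeFactors _ hsub)
      (Nat.prod_primeFactors_dvd n)
  have hpos : (0 : ℝ) < (t.val.prod : ℝ) := by
    rw [Finset.prod_val]
    push_cast
    apply Finset.prod_pos
    intro p hp
    exact_mod_cast (Nat.prime_of_mem_primeFactors (hsub hp)).pos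
  rw [Nat.cast_div hdvd (ne_of_gt hpos), Finset.prod_val]
  push_cast
  simp only [one_div, Finset.prod_inv_distrib, id]
  rw [div_eq_mul_inv]

lemma sum_Icc_divisorsAntidiagonal (N : ℕ) (F : ℕ → ℕ → ℝ) :
    ∑ n ∈ Icc 1 N, ∑ p ∈ n.divisorsAntidiagonal, F p.1 p.2
      = ∑ d ∈ Icc 1 N, ∑ e ∈ Icc 1 (N / d), F d e := by
  rw [Finset.sum_sigma', Finset.sum_sigma']
  refine Finset.sum_nbij' (fun x => ⟨x.2.1, x.2.2⟩) (fun y => ⟨y.1 * y.2, (y.1, y.2)⟩)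
    ?_ ?_ ?_ ?_ ?_
  · rintro ⟨n, d, e⟩ hx
    simp only [Finset.mem_sigma, Finset.mem_Icc, Nat.mem_divisorsAntidiagonal] at hx ⊢
    obtain ⟨⟨hn1, hnN⟩, hde, hn0⟩ := hx
    have hd0 : 0 < d := Nat.pos_of_ne_zero (by rintro rfl; simp at hde; omega)
    have he0 : 0 < e := Nat.pos_of_ne_zero (by rintro rfl; simp at hde; omega)
    refine ⟨⟨hd0, ?_⟩, he0, ?_⟩
    · exact le_trans (Nat.le_of_dvd (Nat.pos_of_ne_zero hn0) ⟨e, hde.symm⟩) hnN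
    · rw [Nat.le_div_iff_mul_le hd0, mul_comm, hde]
      exact hnN
  · rintro ⟨d, e⟩ hy
    simp only [Finset.mem_sigma, Finset.mem_Icc, Nat.mem_divisorsAntidiagonal] at hy ⊢
    obtain ⟨⟨hd1, hdN⟩, he1, heN⟩ := hy
    refine ⟨⟨Nat.one_le_iff_ne_zero.mpr (by positivity), ?_⟩, trivial, by positivity⟩
    calc d * e ≤ d * (N / d) := Nat.mul_le_mul_left d heN
      _ ≤ N := Nat.mul_div_le N d
  · rintro ⟨n, d, e⟩ hx
    simp only [Finset.mem_sigma, Finset.mem_Icc, Nat.mem_divisorsAntidiagonal] at hx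
    obtain ⟨-, hde, -⟩ := hx
    simpa using hde
  · rintro ⟨d, e⟩ hy
    rfl
  · rintro ⟨n, d, e⟩ hx
    rfl

lemma sum_Icc_id_real (m : ℕ) : ∑ e ∈ Icc 1 m, (e : ℝ) = m * (m + 1) / 2 := by
  induction m with
  | zero => simp
  | succ k ih =>
    rw [Finset.sum_Icc_succ_top (by omega), ih]
    push_cast
    ring

lemma tail_bound {N : ℕ} (hN : 1 ≤ N) :
    ∑' k : ℕ, sqf (k + (N + 1)) / ((k + (N + 1) : ℕ) : ℝ) ^ 2 ≤ 1 / N := by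
  have hsummable : Summable (fun k : ℕ => sqf (k + (N + 1)) / ((k + (N + 1) : ℕ) : ℝ) ^ 2) := by
    have h := summable_sqf.of_norm
    exact (summable_nat_add_iff (f := fun d : ℕ => sqf d / (d : ℝ) ^ 2) (N + 1)).mpr h
  apply Summable.tsum_le_of_sum_le hsummable
  intro s
  obtain ⟨M, hM⟩ := Finset.exists_nat_subset_range s
  calc ∑ k ∈ s, sqf (k + (N + 1)) / ((k + (N + 1) : ℕ) : ℝ) ^ 2
      ≤ ∑ k ∈ Finset.range M, sqf (k + (N + 1)) / ((k + (N + 1) : ℕ) : ℝ) ^ 2 := by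
        apply Finset.sum_le_sum_of_subset_of_nonneg hM
        intro i _ _
        have := sqf_nonneg (i + (N + 1))
        positivity
    _ ≤ ∑ k ∈ Finset.range M, (1 / ((k : ℝ) + N) - 1 / ((k : ℝ) + N + 1)) := by
        apply Finset.sum_le_sum
        intro k _
        have h1 : (0:ℝ) < (k : ℝ) + N := by
          have : (1:ℝ) ≤ (N:ℝ) := by exact_mod_cast hN
          linarith [Nat.cast_nonneg (α := ℝ) k]
        have h2 : (0:ℝ) < (k : ℝ) + N + 1 := by linarith
        have heq : 1 / ((k : ℝ) + N) - 1 / ((k : ℝ) + N + 1)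
            = 1 / (((k : ℝ) + N) * ((k : ℝ) + N + 1)) := by
          field_simp
          ring
        rw [heq]
        have hcast : ((k + (N + 1) : ℕ) : ℝ) = (k : ℝ) + N + 1 := by push_cast; ring
        rw [hcast]
        calc sqf (k + (N + 1)) / ((k : ℝ) + N + 1) ^ 2
            ≤ 1 / ((k : ℝ) + N + 1) ^ 2 := by
              apply div_le_div₀ zero_le_one (sqf_le_one _) (by positivity) le_rfl
          _ ≤ 1 / (((k : ℝ) + N) * ((k : ℝ) + N + 1)) := by
              apply one_div_le_one_div_of_le (by positivity)
              nlinarith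
    _ = 1 / (N : ℝ) - 1 / ((M : ℝ) + N) := by
        have h := Finset.sum_range_sub' (f := fun i : ℕ => 1 / ((i : ℝ) + N)) M
        have h2 : ∑ k ∈ Finset.range M, (1 / ((k : ℝ) + N) - 1 / ((k : ℝ) + N + 1))
            = ∑ i ∈ Finset.range M, (1 / ((i : ℝ) + N) - 1 / (((i + 1 : ℕ) : ℝ) + N)) := by
          apply Finset.sum_congr rfl
          intro i _
          push_cast
          ring
        rw [h2, h]
        norm_num
    _ ≤ 1 / (N : ℝ) := by
        have h1 : (0:ℝ) < (M : ℝ) + N := by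
          have : (1:ℝ) ≤ (N:ℝ) := by exact_mod_cast hN
          linarith [Nat.cast_nonneg (α := ℝ) M]
        have : 0 ≤ 1 / ((M : ℝ) + N) := by positivity
        linarith

set_option maxHeartbeats 2000000 in
open Real in
theorem sum_psi_asymptotic :
    ∃ K : ℝ, ∀ x : ℝ, 2 ≤ x →
      |(∑ n ∈ Finset.Icc 1 ⌊x⌋₊, dedekindPsi n) - (15 / (2 * Real.pi ^ 2)) * x ^ 2|
        ≤ K * x * Real.log x := by
  use 5
  intro x hx
  have hx0 : (0:ℝ) < x := by linarith
  set N := ⌊x⌋₊ with hNdef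
  have hN2 : 2 ≤ N := Nat.le_floor (by exact_mod_cast hx)
  have hN1 : 1 ≤ N := le_trans one_le_two hN2
  have hNx : (N : ℝ) ≤ x := Nat.floor_le (by linarith)
  have hxN1 : x < (N : ℝ) + 1 := by exact_mod_cast Nat.lt_floor_add_one x
  have hNpos : (1:ℝ) ≤ (N:ℝ) := by exact_mod_cast hN1
  -- Step 1 : rewrite the sum
  have hS : ∑ n ∈ Finset.Icc 1 N, dedekindPsi n
      = ∑ d ∈ Finset.Icc 1 N, sqf d * (((N / d : ℕ) : ℝ) * (((N / d : ℕ) : ℝ) + 1) / 2) := by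
    have e1 : ∑ n ∈ Finset.Icc 1 N, dedekindPsi n
        = ∑ n ∈ Finset.Icc 1 N, ∑ p ∈ n.divisorsAntidiagonal, sqf p.1 * ((p.2 : ℕ) : ℝ) := by
      refine Finset.sum_congr rfl fun n hn => ?_
      have hn0 : n ≠ 0 := by
        have := (Finset.mem_Icc.mp hn).1; omega
      rw [dedekindPsi_eq hn0]
      exact (Nat.sum_divisorsAntidiagonal (fun d e => sqf d * ((e : ℕ) : ℝ))).symm
    rw [e1, sum_Icc_divisorsAntidiagonal N (fun d e => sqf d * ((e : ℕ) : ℝ))]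
    refine Finset.sum_congr rfl fun d hd => ?_
    rw [← Finset.mul_sum, sum_Icc_id_real (N / d)]
  -- per-term bound
  have key : ∀ d ∈ Finset.Icc 1 N,
      |sqf d * (((N / d : ℕ) : ℝ) * (((N / d : ℕ) : ℝ) + 1) / 2)
        - sqf d * (x ^ 2 / (2 * (d : ℝ) ^ 2))| ≤ x / d := by
    intro d hd
    obtain ⟨hd1, hdN⟩ := Finset.mem_Icc.mp hd
    have hdpos : (0:ℝ) < (d : ℝ) := by exact_mod_cast hd1
    have hmd : N / d = ⌊x / (d : ℝ)⌋₊ := by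
      rw [hNdef, ← Nat.floor_div_natCast x d]
    have htpos : 0 ≤ x / (d : ℝ) := by positivity
    have hmle : ((N / d : ℕ) : ℝ) ≤ x / d := by rw [hmd]; exact Nat.floor_le htpos
    have hmlt : x / d < ((N / d : ℕ) : ℝ) + 1 := by
      rw [hmd]; exact Nat.lt_floor_add_one (x / (d : ℝ))
    have hB : x ^ 2 / (2 * (d : ℝ) ^ 2) = (x / d) ^ 2 / 2 := by
      rw [div_pow]; ring
    have hfac : sqf d * (((N / d : ℕ) : ℝ) * (((N / d : ℕ) : ℝ) + 1) / 2)
        - sqf d * (x ^ 2 / (2 * (d : ℝ) ^ 2))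
        = sqf d * (((N / d : ℕ) : ℝ) * (((N / d : ℕ) : ℝ) + 1) / 2 - (x / d) ^ 2 / 2) := by
      rw [hB]; ring
    rw [hfac, abs_mul, abs_of_nonneg (sqf_nonneg d)]
    have habs : |((N / d : ℕ) : ℝ) * (((N / d : ℕ) : ℝ) + 1) / 2 - (x / d) ^ 2 / 2| ≤ x / d := by
      rw [abs_le]
      constructor
      · nlinarith
      · nlinarith
    calc sqf d * |((N / d : ℕ) : ℝ) * (((N / d : ℕ) : ℝ) + 1) / 2 - (x / d) ^ 2 / 2|
        ≤ 1 * |((N / d : ℕ) : ℝ) * (((N / d : ℕ) : ℝ) + 1) / 2 - (x / d) ^ 2 / 2| :=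
          mul_le_mul_of_nonneg_right (sqf_le_one d) (abs_nonneg _)
      _ ≤ x / d := by rw [one_mul]; exact habs
  -- harmonic sum bound
  have hsum1 : ∑ d ∈ Finset.Icc 1 N, x / (d : ℝ) ≤ x * (1 + Real.log x) := by
    have e : ∑ d ∈ Finset.Icc 1 N, x / (d : ℝ) = x * ∑ d ∈ Finset.Icc 1 N, ((d : ℝ))⁻¹ := by
      rw [Finset.mul_sum]
      exact Finset.sum_congr rfl fun d _ => div_eq_mul_inv x _
    rw [e]
    have hharm : ∑ d ∈ Finset.Icc 1 N, ((d : ℝ))⁻¹ = ((harmonic N : ℚ) : ℝ) := by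
      rw [harmonic_eq_sum_Icc]
      push_cast
      rfl
    rw [hharm]
    have h1 : ((harmonic N : ℚ) : ℝ) ≤ 1 + Real.log N := harmonic_le_one_add_log N
    have h2 : Real.log (N : ℝ) ≤ Real.log x := Real.log_le_log (by linarith) hNx
    nlinarith
  -- tail
  set C : ℝ := 15 / Real.pi ^ 2 with hCdef
  set P : ℝ := ∑ d ∈ Finset.Icc 1 N, sqf d / (d : ℝ) ^ 2 with hPdef
  have hsummable := summable_sqf.of_norm
  have hsplit := Summable.sum_add_tsum_nat_add (N + 1) hsummable
  have htsum : ∑' d : ℕ, sqf d / (d : ℝ) ^ 2 = C := hasSum_sqf.tsum_eq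
  have hrange : ∑ i ∈ Finset.range (N + 1), sqf i / (i : ℝ) ^ 2 = P := by
    have hins : Finset.range (N + 1) = insert 0 (Finset.Icc 1 N) := by
      ext a
      simp only [Finset.mem_range, Finset.mem_insert, Finset.mem_Icc]
      omega
    rw [hins, Finset.sum_insert (by simp)]
    have h0 : sqf 0 = 0 := by simp [sqf, not_squarefree_zero]
    rw [h0]
    simp [hPdef]
  have hCP : C - P = ∑' k : ℕ, sqf (k + (N + 1)) / ((k + (N + 1) : ℕ) : ℝ) ^ 2 := by
    rw [htsum, hrange] at hsplit
    push_cast at hsplit ⊢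
    linarith
  have htail_nonneg : 0 ≤ C - P := by
    rw [hCP]
    apply tsum_nonneg
    intro k
    have := sqf_nonneg (k + (N + 1))
    positivity
  have htail_le : C - P ≤ 1 / N := by
    rw [hCP]; exact tail_bound hN1
  -- assembly
  have h15 : 15 / (2 * Real.pi ^ 2) * x ^ 2 = x ^ 2 / 2 * C := by
    rw [hCdef]
    have hπ : Real.pi ≠ 0 := Real.pi_ne_zero
    field_simp
  have hrw : (∑ n ∈ Finset.Icc 1 N, dedekindPsi n) - 15 / (2 * Real.pi ^ 2) * x ^ 2
      = (∑ d ∈ Finset.Icc 1 N, (sqf d * (((N / d : ℕ) : ℝ) * (((N / d : ℕ) : ℝ) + 1) / 2)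
          - sqf d * (x ^ 2 / (2 * (d : ℝ) ^ 2))))
        - x ^ 2 / 2 * (C - P) := by
    rw [hS, h15, Finset.sum_sub_distrib]
    have hBP : ∑ d ∈ Finset.Icc 1 N, sqf d * (x ^ 2 / (2 * (d : ℝ) ^ 2)) = x ^ 2 / 2 * P := by
      rw [hPdef, Finset.mul_sum]
      exact Finset.sum_congr rfl fun d _ => by ring
    rw [hBP]
    ring
  rw [hrw]
  have step1 : |(∑ d ∈ Finset.Icc 1 N, (sqf d * (((N / d : ℕ) : ℝ) * (((N / d : ℕ) : ℝ) + 1) / 2)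
          - sqf d * (x ^ 2 / (2 * (d : ℝ) ^ 2)))) - x ^ 2 / 2 * (C - P)|
      ≤ (∑ d ∈ Finset.Icc 1 N, x / (d : ℝ)) + x ^ 2 / 2 * (C - P) := by
    refine le_trans (abs_sub _ _) ?_
    gcongr
    · refine le_trans (Finset.abs_sum_le_sum_abs _ _) ?_
      exact Finset.sum_le_sum key
    · rw [abs_of_nonneg (by positivity)]
  refine le_trans step1 ?_
  have hb2 : x ^ 2 / 2 * (C - P) ≤ x := by
    have h1 : x ^ 2 / 2 * (C - P) ≤ x ^ 2 / 2 * (1 / N) := by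
      apply mul_le_mul_of_nonneg_left htail_le (by positivity)
    refine le_trans h1 ?_
    rw [div_mul_div_comm, mul_one, div_le_iff₀ (by positivity)]
    nlinarith
  have hlog2 : (0.6931471803 : ℝ) < Real.log 2 := Real.log_two_gt_d9
  have hlogx : Real.log 2 ≤ Real.log x := Real.log_le_log two_pos hx
  nlinarith [hsum1, hb2, hx0]
end

section
/- For positive integers q and n, let B_q(n) denote the number of integers a with 1 ≤ a ≤ n² and a² ≡ 4q (mod n²). There is a constant K such that for every positive integer q and every real number x ≥ 2, ∑_{d ≤ x, gcd(d,q) = 1} (ψ(d)/d) · B_q(d) ≤ K · x · log x, where the sum is over positive integers d ≤ x coprime to q and log denotes the natural logarithm. -/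
open scoped BigOperators
open Finset

/-- `B_q(n)` is the number of integers `a` with `1 ≤ a ≤ n²` and `a² ≡ 4q (mod n²)`. -/
def Bfun (q n : ℕ) : ℕ :=
  ((Finset.Icc 1 (n ^ 2)).filter (fun a => a ^ 2 % n ^ 2 = (4 * q) % n ^ 2)).card

namespace SumPsiB

/-- products of subsets of prime factors are divisors, injectively -/
lemma prod_mem_divisors {n : ℕ} (hn : n ≠ 0) {t : Finset ℕ} (ht : t ∈ n.primeFactors.powerset) :
    (∏ p ∈ t, p) ∈ n.divisors := by
  rw [Finset.mem_powerset] at ht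
  rw [Nat.mem_divisors]
  exact ⟨(Finset.prod_dvd_prod_of_subset _ _ _ ht).trans (Nat.prod_primeFactors_dvd n), hn⟩

lemma prod_injOn {n : ℕ} : ∀ t ∈ n.primeFactors.powerset, ∀ t' ∈ n.primeFactors.powerset,
    (∏ p ∈ t, p) = (∏ p ∈ t', p) → t = t' := by
  intro t ht t' ht' h
  rw [Finset.mem_powerset] at ht ht'
  have h1 : (∏ p ∈ t, p).primeFactors = t :=
    Nat.primeFactors_prod (fun p hp => Nat.prime_of_mem_primeFactors (ht hp))
  have h2 : (∏ p ∈ t', p).primeFactors = t' :=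
    Nat.primeFactors_prod (fun p hp => Nat.prime_of_mem_primeFactors (ht' hp))
  rw [← h1, ← h2, h]

lemma two_pow_omega_le {n : ℕ} (hn : n ≠ 0) :
    2 ^ n.primeFactors.card ≤ n.divisors.card := by
  rw [← Finset.card_powerset]
  exact Finset.card_le_card_of_injOn _ (fun t ht => prod_mem_divisors hn ht)
    (fun t ht t' ht' h => prod_injOn t ht t' ht' h)

/-- psi(d)/d is at most the sum of reciprocals of divisors -/
lemma psi_div_le {d : ℕ} (hd : d ≠ 0) :
    dedekindPsi d / d ≤ ∑ e ∈ d.divisors, (1 : ℝ) / e := by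
  have hd' : (d : ℝ) ≠ 0 := Nat.cast_ne_zero.mpr hd
  unfold dedekindPsi
  rw [mul_comm, mul_div_assoc, div_self hd', mul_one]
  have h1 : ∏ p ∈ d.primeFactors, (1 + 1 / (p : ℝ))
      = ∑ t ∈ d.primeFactors.powerset, (1 : ℝ) / (∏ p ∈ t, p : ℕ) := by
    have : ∀ p ∈ d.primeFactors, (1 : ℝ) + 1 / p = 1 / p + 1 := fun p _ => add_comm _ _
    rw [Finset.prod_congr rfl this, Finset.prod_add]
    refine Finset.sum_congr rfl (fun t ht => ?_)
    rw [Finset.prod_const_one, mul_one, Nat.cast_prod]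
    simp [one_div, Finset.prod_inv_distrib]
  have h2 : ∑ t ∈ d.primeFactors.powerset, (1:ℝ)/(∏ p ∈ t, p : ℕ)
      = ∑ e ∈ d.primeFactors.powerset.image (fun t => ∏ p ∈ t, p), (1:ℝ)/(e:ℝ) :=
    (Finset.sum_image (f := fun e : ℕ => (1:ℝ)/(e:ℝ)) prod_injOn).symm
  rw [h1, h2]
  refine Finset.sum_le_sum_of_subset_of_nonneg ?_ (fun e _ _ => by positivity)
  intro e he
  rw [Finset.mem_image] at he
  obtain ⟨t, ht, rfl⟩ := he
  exact prod_mem_divisors hd ht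

/-- submultiplicativity of the divisor count -/
lemma tau_mul_le (e m : ℕ) :
    (e * m).divisors.card ≤ e.divisors.card * m.divisors.card := by
  calc (e * m).divisors.card
      ≤ ((e.divisors ×ˢ m.divisors).image (fun p : ℕ × ℕ => p.1 * p.2)).card := by
        refine Finset.card_le_card ?_
        intro c hc
        rw [Nat.mem_divisors] at hc
        obtain ⟨a, b, ha, hb, rfl⟩ := Nat.dvd_mul.mp hc.1
        have he : e ≠ 0 := fun h => hc.2 (by simp [h])
        have hm : m ≠ 0 := fun h => hc.2 (by simp [h])
        exact Finset.mem_image.mpr ⟨(a, b), Finset.mem_product.mpr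
          ⟨Nat.mem_divisors.mpr ⟨ha, he⟩, Nat.mem_divisors.mpr ⟨hb, hm⟩⟩, rfl⟩
    _ ≤ (e.divisors ×ˢ m.divisors).card := Finset.card_image_le
    _ = e.divisors.card * m.divisors.card := Finset.card_product _ _

lemma dichotomy {q n : ℕ} (hco : Nat.Coprime n q)
    {p : ℕ} (hp : p ∈ n.primeFactors) {a b : ℤ}
    (ha : ((n^2 : ℕ) : ℤ) ∣ a^2 - 4*q) (hb : ((n^2 : ℕ) : ℤ) ∣ b^2 - 4*q) :
    ((p:ℤ)^((n^2).factorization p) ∣ 8*(a - b)) ∨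
      ((p:ℤ)^((n^2).factorization p) ∣ 8*(a + b)) := by
  have hpp : p.Prime := Nat.prime_of_mem_primeFactors hp
  have hpn : p ∣ n := Nat.dvd_of_mem_primeFactors hp
  set j := (n^2).factorization p with hj
  have hpjn : ((p^j : ℕ) : ℤ) ∣ ((n^2 : ℕ) : ℤ) :=
    Int.natCast_dvd_natCast.mpr (Nat.ordProj_dvd (n^2) p)
  have hprod : ((n^2 : ℕ) : ℤ) ∣ (a - b) * (a + b) := by
    have hring : (a - b) * (a + b) = (a^2 - 4*q) - (b^2 - 4*q) := by ring
    rw [hring]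
    exact dvd_sub ha hb
  have hpj' : (p:ℤ)^j ∣ (a - b) * (a + b) := by
    have : ((p^j : ℕ) : ℤ) ∣ (a - b) * (a + b) := hpjn.trans hprod
    exact_mod_cast this
  by_cases hp2 : p = 2
  · subst hp2
    have hqodd : ¬ (2 ∣ q) := by
      intro h
      have h2 : 2 ∣ Nat.gcd n q := Nat.dvd_gcd hpn h
      rw [hco] at h2
      omega
    have h4 : ((n^2 : ℕ) : ℤ) = 4 * ((n^2 / 4 : ℕ) : ℤ) := by
      have h44 : (4 : ℕ) ∣ n^2 := by
        calc (4 : ℕ) = 2^2 := by norm_num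
          _ ∣ n^2 := pow_dvd_pow_of_dvd hpn 2
      exact_mod_cast (Nat.mul_div_cancel' h44).symm
    have hdvd4 : ∀ c : ℤ, ((n^2 : ℕ) : ℤ) ∣ c → (4:ℤ) ∣ c := by
      intro c hc
      exact (Dvd.intro _ h4.symm).trans hc
    have heven : ∀ c : ℤ, ((n^2 : ℕ) : ℤ) ∣ c^2 - 4*q → (2:ℤ) ∣ c := by
      intro c hc
      have h4c : (4:ℤ) ∣ c^2 := by
        have h1 : (4:ℤ) ∣ (c^2 - 4*q) := hdvd4 _ hc
        have h2 : c^2 = (c^2 - 4*q) + 4*q := by ring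
        rw [h2]
        exact dvd_add h1 ⟨q, by ring⟩
      have h2cc : (2:ℤ) ∣ c * c := by
        have h24 : (2:ℤ) ∣ 4 := by norm_num
        have := h24.trans h4c
        rwa [sq] at this
      exact (Int.prime_two.dvd_mul.mp h2cc).elim id id
    obtain ⟨α, rfl⟩ := heven a ha
    obtain ⟨β, rfl⟩ := heven b hb
    by_cases hjle : j ≤ 4
    · left
      have h1 : (2:ℤ)^j ∣ (2:ℤ)^4 := pow_dvd_pow 2 hjle
      have h2 : 8*(2*α - 2*β) = (2:ℤ)^4 * (α - β) := by ring
      rw [h2]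
      exact h1.mul_right _
    · -- j ≥ 5, so 16 ∣ n²
      have h16 : ∀ c : ℤ, ((n^2 : ℕ) : ℤ) ∣ c → (16:ℤ) ∣ c := by
        intro c hc
        have h1 : (2:ℤ)^4 ∣ (2:ℤ)^j := pow_dvd_pow 2 (by omega)
        have h2 : ((2^j : ℕ) : ℤ) ∣ c := hpjn.trans hc
        push_cast at h2
        calc (16:ℤ) = 2^4 := by norm_num
          _ ∣ 2^j := h1
          _ ∣ c := h2
      have hodd : ∀ c : ℤ, ((n^2 : ℕ) : ℤ) ∣ (2*c)^2 - 4*q → ¬ (2:ℤ) ∣ c := by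
        intro c hc h2c
        have h1 : (16:ℤ) ∣ ((2*c)^2 - 4*q) := h16 _ hc
        have h2 : (2*c)^2 - 4*(q:ℤ) = 4*(c^2 - q) := by ring
        rw [h2] at h1
        have h3 : (4:ℤ) ∣ (c^2 - q) := by
          rcases h1 with ⟨k, hk⟩
          exact ⟨k, by linarith⟩
        have h4' : (2:ℤ) ∣ (c^2 - q) := (by norm_num : (2:ℤ) ∣ 4).trans h3
        have hc2 : (2:ℤ) ∣ c^2 := by
          have := h2c.mul_right c
          rwa [← sq] at this
        have h5 : (2:ℤ) ∣ (q:ℤ) := by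
          have hq' : (q:ℤ) = c^2 - (c^2 - q) := by ring
          rw [hq']
          exact dvd_sub hc2 h4'
        exact hqodd (by exact_mod_cast h5)
      have hαodd := hodd α ha
      have hβodd := hodd β hb
      have hu : (2:ℤ) ∣ (α - β) := by
        rcases Int.even_or_odd α with hα | hα
        · exact absurd hα.two_dvd hαodd
        rcases Int.even_or_odd β with hβ | hβ
        · exact absurd hβ.two_dvd hβodd
        exact (Int.even_sub.mpr (iff_of_false (Int.not_even_iff_odd.mpr hα)
          (Int.not_even_iff_odd.mpr hβ))).two_dvd
      have hv : (2:ℤ) ∣ (α + β) := by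
        have h1 : α + β = (α - β) + 2*β := by ring
        rw [h1]
        exact dvd_add hu ⟨β, by ring⟩
      obtain ⟨u, hu'⟩ := hu
      obtain ⟨v, hv'⟩ := hv
      have hnotboth : ¬ ((2:ℤ) ∣ u ∧ (2:ℤ) ∣ v) := by
        rintro ⟨h2u, h2v⟩
        apply hαodd
        have hα2 : 2*α = 2*u + 2*v := by rw [← hu', ← hv']; ring
        have : α = u + v := by linarith
        rw [this]
        exact dvd_add h2u h2v
      have hprod16 : (2:ℤ)^j ∣ 16*(u*v) := by
        have heq : (2*α - 2*β) * (2*α + 2*β) = 16*(u*v) := by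
          have e1 : 2*α - 2*β = 2*(2*u) := by rw [← hu']; ring
          have e2 : 2*α + 2*β = 2*(2*v) := by rw [← hv']; ring
          rw [e1, e2]; ring
        rwa [heq] at hpj'
      by_cases hud : (2:ℤ) ∣ u
      · -- then v odd; left branch via u even? no: v odd ⇒ 2^j ∣ 16u, left
        have hvd : ¬ (2:ℤ) ∣ v := fun h => hnotboth ⟨hud, h⟩
        have hcop : IsCoprime ((2:ℤ)^j) v :=
          (Int.prime_two.irreducible.coprime_pow_of_not_dvd j hvd).symm
        have h1 : (2:ℤ)^j ∣ 16*u := by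
          refine hcop.dvd_of_dvd_mul_right ?_
          have : 16*(u*v) = 16*u*v := by ring
          rwa [this] at hprod16
        left
        have h2 : 8*(2*α - 2*β) = 2*(16*u) := by linear_combination 16 * hu' 
        rw [h2]
        exact h1.mul_left 2
      · have hcop : IsCoprime ((2:ℤ)^j) u :=
          Int.prime_two.irreducible.coprime_pow_of_not_dvd j hud |>.symm
        have h1 : (2:ℤ)^j ∣ 16*v := by
          refine hcop.dvd_of_dvd_mul_right ?_
          have : 16*(u*v) = 16*v*u := by ring
          rwa [this] at hprod16
        right
        have h2 : 8*(2*α + 2*β) = 2*(16*v) := by linear_combination 16 * hv' 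
        rw [h2]
        exact h1.mul_left 2
  · -- p odd
    have hIntp : Prime (p:ℤ) := Nat.prime_iff_prime_int.mp hpp
    have hp2Z : ¬ (p:ℤ) ∣ 2 := by
      intro h
      have hpn2 : (p:ℕ) ∣ 2 := by exact_mod_cast h
      exact hp2 ((Nat.prime_dvd_prime_iff_eq hpp Nat.prime_two).mp hpn2)
    have hnotboth : ¬ ((p:ℤ) ∣ (a - b) ∧ (p:ℤ) ∣ (a + b)) := by
      rintro ⟨h1, h2⟩
      have h2b : (p:ℤ) ∣ 2*b := by
        have : 2*b = (a + b) - (a - b) := by ring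
        rw [this]
        exact dvd_sub h2 h1
      have hpb : (p:ℤ) ∣ b := ((hIntp.dvd_mul.mp h2b).elim (fun h => absurd h hp2Z) id)
      have hp4q : (p:ℤ) ∣ 4*q := by
        have hb2 : (p:ℤ) ∣ b^2 := by rw [sq]; exact hpb.mul_right b
        have hn2 : (p:ℤ) ∣ b^2 - 4*q := (Int.natCast_dvd_natCast.mpr
          ((Nat.dvd_of_mem_primeFactors hp).trans (dvd_pow_self n two_ne_zero))).trans hb
        have : (4*q : ℤ) = b^2 - (b^2 - 4*q) := by ring
        rw [this]
        exact dvd_sub hb2 hn2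
      have hpq : (p:ℤ) ∣ (q:ℤ) := by
        rcases hIntp.dvd_mul.mp hp4q with h | h
        · exfalso
          have : (p:ℤ) ∣ 2*2 := by norm_num at h ⊢; exact h
          rcases hIntp.dvd_mul.mp this with h' | h' <;> exact hp2Z h'
        · exact h
      have hpqn : p ∣ q := by exact_mod_cast hpq
      have : p ∣ Nat.gcd n q := Nat.dvd_gcd hpn hpqn
      rw [hco] at this
      exact hpp.ne_one (Nat.dvd_one.mp this)
    by_cases hd1 : (p:ℤ) ∣ (a - b)
    · have hnd : ¬ (p:ℤ) ∣ (a + b) := fun h => hnotboth ⟨hd1, h⟩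
      have hcop : IsCoprime ((p:ℤ)^j) (a + b) :=
        (hIntp.irreducible.coprime_pow_of_not_dvd j hnd).symm
      left
      exact (hcop.dvd_of_dvd_mul_right hpj').mul_left 8
    · have hcop : IsCoprime ((p:ℤ)^j) (a - b) :=
        hIntp.irreducible.coprime_pow_of_not_dvd j hd1 |>.symm
      right
      have hcomm : (a - b) * (a + b) = (a + b) * (a - b) := by ring
      rw [hcomm] at hpj'
      exact (hcop.dvd_of_dvd_mul_right hpj').mul_left 8

lemma Bfun_le {q n : ℕ} (hn : 0 < n) (hco : Nat.Coprime n q) :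
    Bfun q n ≤ 15 * n.divisors.card := by
  classical
  have hM0 : n ^ 2 ≠ 0 := pow_ne_zero 2 hn.ne'
  set S := (Finset.Icc 1 (n^2)).filter (fun a => a ^ 2 % n^2 = (4 * q) % n^2) with hS
  have key : ∀ a ∈ S, ((n^2 : ℕ) : ℤ) ∣ (a:ℤ)^2 - 4*q := by
    intro a ha
    have h : (a^2 : ℕ) ≡ 4*q [MOD n^2] := (Finset.mem_filter.mp ha).2
    have h2 := (Nat.modEq_iff_dvd).mp h
    have h3 : ((a:ℤ))^2 - 4*q = -(((4*q : ℕ) : ℤ) - ((a^2 : ℕ) : ℤ)) := by push_cast; ring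
    rw [h3]
    exact dvd_neg.mpr h2
  rcases S.eq_empty_or_nonempty with hSe | hSne
  · have : Bfun q n = 0 := by
      rw [Bfun, ← hS, hSe, Finset.card_empty]
    omega
  obtain ⟨a₀, ha₀⟩ := hSne
  set T : ℕ → Finset ℕ := fun a => n.primeFactors.filter
      (fun p => (p:ℤ)^((n^2).factorization p) ∣ 8*((a:ℤ) - (a₀:ℤ))) with hT
  have comb : ∀ a ∈ S, ∀ b ∈ S, T a = T b → ((n^2 : ℕ) : ℤ) ∣ 8*((a:ℤ) - b) := by
    intro a ha b hb hTab
    rcases eq_or_ne (8*((a:ℤ) - b)) 0 with h0 | h0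
    · rw [h0]; exact dvd_zero _
    set c := (8*((a:ℤ) - b)).natAbs with hc
    have hc0 : c ≠ 0 := fun h => h0 (Int.natAbs_eq_zero.mp h)
    have hdvd : n^2 ∣ c := by
      rw [← Nat.factorization_le_iff_dvd hM0 hc0, Finsupp.le_def]
      intro p
      by_cases hp : p ∈ n.primeFactors
      · -- the real case
        have hpp := Nat.prime_of_mem_primeFactors hp
        have hjdvd : (p:ℤ)^((n^2).factorization p) ∣ 8*((a:ℤ) - b) := by
          by_cases hmem : p ∈ T a
          · have hmb : p ∈ T b := hTab ▸ hmem
            have h1 := (Finset.mem_filter.mp hmem).2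
            have h2 := (Finset.mem_filter.mp hmb).2
            have h3 : 8*((a:ℤ) - b) = 8*((a:ℤ) - a₀) - 8*((b:ℤ) - a₀) := by ring
            rw [h3]
            exact dvd_sub h1 h2
          · have hmb : p ∉ T b := hTab ▸ hmem
            have h1 : (p:ℤ)^((n^2).factorization p) ∣ 8*((a:ℤ) + a₀) := by
              rcases dichotomy hco hp (key a ha) (key a₀ ha₀) with h | h
              · exact absurd (Finset.mem_filter.mpr ⟨hp, h⟩) hmem
              · exact h
            have h2 : (p:ℤ)^((n^2).factorization p) ∣ 8*((b:ℤ) + a₀) := by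
              rcases dichotomy hco hp (key b hb) (key a₀ ha₀) with h | h
              · exact absurd (Finset.mem_filter.mpr ⟨hp, h⟩) hmb
              · exact h
            have h3 : 8*((a:ℤ) - b) = 8*((a:ℤ) + a₀) - 8*((b:ℤ) + a₀) := by ring
            rw [h3]
            exact dvd_sub h1 h2
        have hjc : p^((n^2).factorization p) ∣ c := by
          have := Int.natAbs_dvd_natAbs.mpr hjdvd
          simpa [Int.natAbs_pow] using this
        exact (Nat.Prime.pow_dvd_iff_le_factorization hpp hc0).mp hjc
      · -- p not a prime factor : exponent zero
        have hps : (n^2).factorization p = 0 := by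
          have hsup : (n^2).primeFactors = n.primeFactors := Nat.primeFactors_pow n two_ne_zero
          have : p ∉ (n^2).factorization.support := by
            rw [Nat.support_factorization, hsup]
            exact hp
          exact Finsupp.notMem_support_iff.mp this
        rw [hps]
        exact Nat.zero_le _
    have h1 : ((n^2 : ℕ) : ℤ) ∣ (c : ℤ) := Int.natCast_dvd_natCast.mpr hdvd
    exact Int.dvd_natAbs.mp h1
  have fib : ∀ t ∈ n.primeFactors.powerset, (S.filter (fun a => T a = t)).card ≤ 15 := by
    intro t _
    set F := S.filter (fun a => T a = t) with hF
    rcases F.eq_empty_or_nonempty with hFe | ⟨b₀, hb₀⟩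
    · rw [hFe]; simp
    have hb₀S : b₀ ∈ S := Finset.mem_filter.mp hb₀ |>.1
    have hb₀T : T b₀ = t := Finset.mem_filter.mp hb₀ |>.2
    have hMpos : (0:ℤ) < ((n^2 : ℕ) : ℤ) := by exact_mod_cast Nat.pos_of_ne_zero hM0
    have hbd : ∀ a ∈ F, 1 ≤ (a:ℤ) ∧ (a:ℤ) ≤ ((n^2:ℕ):ℤ) := by
      intro a haF
      have haS : a ∈ S := Finset.mem_filter.mp haF |>.1
      have := Finset.mem_Icc.mp (Finset.mem_filter.mp haS |>.1)
      exact ⟨by exact_mod_cast this.1, by exact_mod_cast this.2⟩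
    have hdvdF : ∀ a ∈ F, ((n^2:ℕ):ℤ) ∣ 8*((a:ℤ) - b₀) := by
      intro a haF
      have haS : a ∈ S := Finset.mem_filter.mp haF |>.1
      have haT : T a = t := Finset.mem_filter.mp haF |>.2
      exact comb a haS b₀ hb₀S (haT.trans hb₀T.symm)
    calc F.card ≤ (Finset.Icc (-7:ℤ) 7).card := by
          refine Finset.card_le_card_of_injOn
            (fun a => (8*((a:ℤ) - b₀)) / ((n^2:ℕ):ℤ)) ?_ ?_
          · intro a haF
            have heq := Int.ediv_mul_cancel (hdvdF a haF)
            set tq := (8*((a:ℤ) - b₀)) / ((n^2:ℕ):ℤ) with htq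
            obtain ⟨ha1, ha2⟩ := hbd a haF
            obtain ⟨hb1, hb2⟩ := hbd b₀ hb₀
            rw [Finset.mem_coe, Finset.mem_Icc]
            constructor
            · nlinarith [heq, hMpos]
            · nlinarith [heq, hMpos]
          · intro a haF a' haF' h
            have heq := Int.ediv_mul_cancel (hdvdF a haF)
            have heq' := Int.ediv_mul_cancel (hdvdF a' haF')
            simp only at h
            have : 8*((a:ℤ) - b₀) = 8*((a':ℤ) - b₀) := by
              rw [← heq, ← heq', h]
            have : (a:ℤ) = (a':ℤ) := by linarith
            exact_mod_cast this
      _ = 15 := by rw [Int.card_Icc]; rfl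
  calc Bfun q n = S.card := by rw [Bfun, hS]
    _ = ∑ t ∈ n.primeFactors.powerset, (S.filter (fun a => T a = t)).card :=
        Finset.card_eq_sum_card_fiberwise
          (fun a _ => Finset.mem_powerset.mpr (Finset.filter_subset _ _))
    _ ≤ ∑ _t ∈ n.primeFactors.powerset, 15 := Finset.sum_le_sum fib
    _ = 2 ^ n.primeFactors.card * 15 := by
        rw [Finset.sum_const, Finset.card_powerset, smul_eq_mul]
    _ ≤ n.divisors.card * 15 := Nat.mul_le_mul_right _ (two_pow_omega_le hn.ne')
    _ = 15 * n.divisors.card := mul_comm _ _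

lemma divisors_eq_filter {N d : ℕ} (hd : d ∈ Finset.Icc 1 N) :
    d.divisors = (Finset.Icc 1 N).filter (fun e => e ∣ d) := by
  obtain ⟨hd1, hd2⟩ := Finset.mem_Icc.mp hd
  ext e
  rw [Nat.mem_divisors, Finset.mem_filter, Finset.mem_Icc]
  constructor
  · rintro ⟨he, -⟩
    exact ⟨⟨Nat.pos_of_dvd_of_pos he hd1, (Nat.le_of_dvd hd1 he).trans hd2⟩, he⟩
  · rintro ⟨-, he⟩
    exact ⟨he, by omega⟩

lemma multiples_image (N : ℕ) {e : ℕ} (he : 1 ≤ e) :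
    (Finset.Icc 1 N).filter (fun d => e ∣ d)
      = (Finset.Icc 1 (N / e)).image (fun m => e * m) := by
  ext d
  rw [Finset.mem_filter, Finset.mem_Icc, Finset.mem_image]
  constructor
  · rintro ⟨⟨hd1, hd2⟩, m, rfl⟩
    have hm1 : 1 ≤ m := by
      rcases Nat.eq_zero_or_pos m with rfl | h
      · simp at hd1
      · exact h
    refine ⟨m, Finset.mem_Icc.mpr ⟨hm1, ?_⟩, rfl⟩
    rw [Nat.le_div_iff_mul_le (by omega : 0 < e), mul_comm]
    exact hd2
  · rintro ⟨m, hm, rfl⟩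
    obtain ⟨hm1, hm2⟩ := Finset.mem_Icc.mp hm
    rw [Nat.le_div_iff_mul_le (by omega : 0 < e)] at hm2
    refine ⟨⟨Nat.mul_pos (by omega) hm1, ?_⟩, ⟨m, rfl⟩⟩
    rw [mul_comm]
    exact hm2

lemma swap_sum (N : ℕ) (f : ℕ → ℕ → ℝ) :
    ∑ d ∈ Finset.Icc 1 N, ∑ e ∈ d.divisors, f e d
      = ∑ e ∈ Finset.Icc 1 N, ∑ d ∈ (Finset.Icc 1 N).filter (fun d => e ∣ d), f e d := by
  have h1 : ∀ d ∈ Finset.Icc 1 N,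
      ∑ e ∈ d.divisors, f e d = ∑ e ∈ Finset.Icc 1 N, if e ∣ d then f e d else 0 := by
    intro d hd
    rw [divisors_eq_filter hd, Finset.sum_filter]
  rw [Finset.sum_congr rfl h1, Finset.sum_comm]
  exact Finset.sum_congr rfl fun e _ => (Finset.sum_filter _ _).symm

lemma sum_inv_sq_le (M : ℕ) : ∑ m ∈ Finset.Icc 1 M, (1:ℝ)/(m:ℝ)^2 ≤ 2 := by
  have key : ∀ M : ℕ, 1 ≤ M → ∑ m ∈ Finset.Icc 1 M, (1:ℝ)/(m:ℝ)^2 ≤ 2 - 1/M := by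
    intro M hM
    induction M, hM using Nat.le_induction with
    | base => norm_num
    | succ n hn ih =>
      rw [Finset.sum_Icc_succ_top (by omega)]
      have hn0 : (0:ℝ) < n := by exact_mod_cast hn
      have hn1 : (0:ℝ) < (n:ℝ) + 1 := by linarith
      have e1 : (1:ℝ)/n - 1/((n:ℝ)+1) = 1/((n:ℝ)*((n:ℝ)+1)) := by
        field_simp
        ring
      have e2 : (1:ℝ)/((n:ℝ)+1)^2 ≤ 1/((n:ℝ)*((n:ℝ)+1)) := by
        rw [div_le_div_iff₀ (by positivity) (by positivity)]
        nlinarith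
      have hcast : ((n+1:ℕ):ℝ) = (n:ℝ)+1 := by push_cast; ring
      rw [hcast]
      linarith
  rcases Nat.eq_zero_or_pos M with rfl | hM
  · simp
  · have h := key M hM
    have : (0:ℝ) < M := by exact_mod_cast hM
    have h2 : (0:ℝ) ≤ 1/M := by positivity
    linarith

lemma harmonic_bound (M : ℕ) : ∑ a ∈ Finset.Icc 1 M, (1:ℝ)/a ≤ 1 + Real.log M := by
  have h1 : ∑ a ∈ Finset.Icc 1 M, (1:ℝ)/a = ((harmonic M : ℚ) : ℝ) := by
    rw [harmonic_eq_sum_Icc]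
    push_cast
    exact Finset.sum_congr rfl fun i _ => (one_div _)
  rw [h1]
  exact harmonic_le_one_add_log M

lemma card_multiples (N : ℕ) {a : ℕ} (ha : 1 ≤ a) :
    ((Finset.Icc 1 N).filter (fun d => a ∣ d)).card = N / a := by
  rw [multiples_image N ha, Finset.card_image_of_injective _
    (fun x y h => Nat.eq_of_mul_eq_mul_left (by omega) h), Nat.card_Icc]
  exact Nat.add_sub_cancel _ _

lemma sum_tau_le (M : ℕ) :
    ∑ m ∈ Finset.Icc 1 M, ((m.divisors.card : ℝ)) ≤ M * (1 + Real.log M) := by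
  have h1 : ∀ m ∈ Finset.Icc 1 M, ((m.divisors.card : ℝ))
      = ∑ a ∈ Finset.Icc 1 M, if a ∣ m then (1:ℝ) else 0 := by
    intro m hm
    rw [divisors_eq_filter hm, ← Finset.sum_filter, Finset.sum_const, nsmul_eq_mul, mul_one]
  rw [Finset.sum_congr rfl h1, Finset.sum_comm]
  have h2 : ∀ a ∈ Finset.Icc 1 M,
      (∑ m ∈ Finset.Icc 1 M, if a ∣ m then (1:ℝ) else 0) ≤ (M:ℝ) * (1/a) := by
    intro a ha
    obtain ⟨ha1, _⟩ := Finset.mem_Icc.mp ha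
    rw [← Finset.sum_filter, Finset.sum_const, nsmul_eq_mul, mul_one, card_multiples M ha1]
    calc ((M/a : ℕ) : ℝ) ≤ (M:ℝ)/a := Nat.cast_div_le
      _ = (M:ℝ) * (1/a) := by ring
  calc ∑ a ∈ Finset.Icc 1 M, (∑ m ∈ Finset.Icc 1 M, if a ∣ m then (1:ℝ) else 0)
      ≤ ∑ a ∈ Finset.Icc 1 M, (M:ℝ) * (1/a) := Finset.sum_le_sum h2
    _ = (M:ℝ) * ∑ a ∈ Finset.Icc 1 M, (1:ℝ)/a := by rw [← Finset.mul_sum]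
    _ ≤ (M:ℝ) * (1 + Real.log M) := by
        refine mul_le_mul_of_nonneg_left (harmonic_bound M) (by positivity)

lemma sum_tau_div_sq_le (N : ℕ) :
    ∑ e ∈ Finset.Icc 1 N, (e.divisors.card : ℝ)/(e:ℝ)^2 ≤ 4 := by
  have h1 : ∀ e ∈ Finset.Icc 1 N, (e.divisors.card : ℝ)/(e:ℝ)^2
      = ∑ a ∈ Finset.Icc 1 N, if a ∣ e then (1:ℝ)/(e:ℝ)^2 else 0 := by
    intro e he
    rw [divisors_eq_filter he, ← Finset.sum_filter, Finset.sum_const, nsmul_eq_mul]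
    ring
  rw [Finset.sum_congr rfl h1, Finset.sum_comm]
  have h2 : ∀ a ∈ Finset.Icc 1 N,
      (∑ e ∈ Finset.Icc 1 N, if a ∣ e then (1:ℝ)/(e:ℝ)^2 else 0) ≤ (1/(a:ℝ)^2) * 2 := by
    intro a ha
    obtain ⟨ha1, _⟩ := Finset.mem_Icc.mp ha
    rw [← Finset.sum_filter, multiples_image N ha1, Finset.sum_image
      (fun x _ y _ h => Nat.eq_of_mul_eq_mul_left (by omega) h)]
    have e1 : ∀ m ∈ Finset.Icc 1 (N/a), (1:ℝ)/((a*m : ℕ):ℝ)^2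
        = (1/(a:ℝ)^2) * ((1:ℝ)/(m:ℝ)^2) := by
      intro m _
      push_cast
      rw [mul_pow]
      rw [one_div, one_div, one_div, mul_inv]
    rw [Finset.sum_congr rfl e1, ← Finset.mul_sum]
    exact mul_le_mul_of_nonneg_left (sum_inv_sq_le (N/a)) (by positivity)
  calc ∑ a ∈ Finset.Icc 1 N, (∑ e ∈ Finset.Icc 1 N, if a ∣ e then (1:ℝ)/(e:ℝ)^2 else 0)
      ≤ ∑ a ∈ Finset.Icc 1 N, (1/(a:ℝ)^2) * 2 := Finset.sum_le_sum h2
    _ = (∑ a ∈ Finset.Icc 1 N, (1:ℝ)/(a:ℝ)^2) * 2 := by rw [Finset.sum_mul]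
    _ ≤ 2 * 2 := by
        refine mul_le_mul_of_nonneg_right (sum_inv_sq_le N) (by norm_num)
    _ = 4 := by norm_num

end SumPsiB

theorem sum_psi_mul_B_le :
    ∃ K : ℝ, ∀ q : ℕ, 0 < q → ∀ x : ℝ, 2 ≤ x →
      ∑ d ∈ (Finset.Icc 1 ⌊x⌋₊).filter (fun d => Nat.Coprime d q),
        (dedekindPsi d / d) * Bfun q d ≤ K * x * Real.log x := by
  use 1000
  intro q hq x hx
  set N := ⌊x⌋₊ with hN
  have hx0 : (0:ℝ) < x := by linarith
  have hNx : (N:ℝ) ≤ x := Nat.floor_le (by linarith)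
  have hlogx : 0 < Real.log x := Real.log_pos (by linarith)
  have hlog2x : Real.log 2 ≤ Real.log x := Real.log_le_log (by norm_num) hx
  have step1 : ∑ d ∈ (Finset.Icc 1 N).filter (fun d => Nat.Coprime d q),
      (dedekindPsi d / d) * (Bfun q d : ℝ)
      ≤ ∑ d ∈ Finset.Icc 1 N,
        (∑ e ∈ d.divisors, (1:ℝ)/e) * (15 * d.divisors.card) := by
    refine le_trans (Finset.sum_le_sum ?_) (Finset.sum_le_sum_of_subset_of_nonneg
      (Finset.filter_subset _ _) ?_)
    · intro d hd
      obtain ⟨hdI, hdco⟩ := Finset.mem_filter.mp hd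
      obtain ⟨hd1, -⟩ := Finset.mem_Icc.mp hdI
      have h1 : dedekindPsi d / d ≤ ∑ e ∈ d.divisors, (1:ℝ)/e :=
        SumPsiB.psi_div_le (by omega)
      have h2 : (Bfun q d : ℝ) ≤ 15 * d.divisors.card := by
        exact_mod_cast SumPsiB.Bfun_le hd1 hdco
      have h3 : (0:ℝ) ≤ Bfun q d := Nat.cast_nonneg _
      have h4 : (0:ℝ) ≤ ∑ e ∈ d.divisors, (1:ℝ)/e :=
        Finset.sum_nonneg fun e _ => by positivity
      exact mul_le_mul h1 h2 h3 h4
    · intro d _ _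
      positivity
  have step2 : ∑ d ∈ Finset.Icc 1 N,
      (∑ e ∈ d.divisors, (1:ℝ)/e) * (15 * d.divisors.card)
      = 15 * ∑ d ∈ Finset.Icc 1 N, ∑ e ∈ d.divisors, (d.divisors.card : ℝ)/e := by
    rw [Finset.mul_sum]
    refine Finset.sum_congr rfl fun d _ => ?_
    rw [Finset.sum_mul, Finset.mul_sum]
    exact Finset.sum_congr rfl fun e _ => by ring
  have step3 := SumPsiB.swap_sum N (fun e d => (d.divisors.card : ℝ)/e)
  have step4 : ∀ e ∈ Finset.Icc 1 N,
      ∑ d ∈ (Finset.Icc 1 N).filter (fun d => e ∣ d), (d.divisors.card : ℝ)/e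
      ≤ ((e.divisors.card : ℝ)/(e:ℝ)^2) * (x * (1 + Real.log x)) := by
    intro e he
    obtain ⟨he1, -⟩ := Finset.mem_Icc.mp he
    have he0 : (0:ℝ) < e := by exact_mod_cast he1
    have inner : ∑ m ∈ Finset.Icc 1 (N/e), ((m.divisors.card : ℝ))
        ≤ (x/e) * (1 + Real.log x) := by
      have t1 := SumPsiB.sum_tau_le (N/e)
      have c1 : ((N/e : ℕ) : ℝ) ≤ x/e := by
        refine Nat.cast_div_le.trans ?_
        gcongr
      have c0 : (0:ℝ) ≤ 1 + Real.log ((N/e : ℕ) : ℝ) := by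
        rcases Nat.eq_zero_or_pos (N/e) with h | h
        · rw [h]; simp
        · have : (0:ℝ) ≤ Real.log ((N/e : ℕ) : ℝ) :=
            Real.log_natCast_nonneg _
          linarith
      have c2 : 1 + Real.log ((N/e : ℕ) : ℝ) ≤ 1 + Real.log x := by
        rcases Nat.eq_zero_or_pos (N/e) with h | h
        · rw [h]; simp; linarith
        · have h1 : ((N/e : ℕ) : ℝ) ≤ x := by
            calc ((N/e : ℕ) : ℝ) ≤ (N:ℝ) := by exact_mod_cast Nat.div_le_self N e
              _ ≤ x := hNx
          have := Real.log_le_log (by exact_mod_cast h) h1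
          linarith
      calc ∑ m ∈ Finset.Icc 1 (N/e), ((m.divisors.card : ℝ))
          ≤ ((N/e : ℕ) : ℝ) * (1 + Real.log ((N/e : ℕ) : ℝ)) := t1
        _ ≤ (x/e) * (1 + Real.log x) := mul_le_mul c1 c2 c0 (by positivity)
    rw [SumPsiB.multiples_image N he1, Finset.sum_image
      (fun a _ b _ h => Nat.eq_of_mul_eq_mul_left (by omega) h)]
    calc ∑ m ∈ Finset.Icc 1 (N/e), (((e*m).divisors.card : ℝ))/e
        ≤ ∑ m ∈ Finset.Icc 1 (N/e),
            ((e.divisors.card : ℝ) * (m.divisors.card : ℝ))/e := by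
          refine Finset.sum_le_sum fun m _ => ?_
          gcongr
          exact_mod_cast SumPsiB.tau_mul_le e m
      _ = ((e.divisors.card : ℝ)/e) * ∑ m ∈ Finset.Icc 1 (N/e), ((m.divisors.card : ℝ)) := by
          rw [Finset.mul_sum]
          exact Finset.sum_congr rfl fun m _ => by ring
      _ ≤ ((e.divisors.card : ℝ)/e) * ((x/e) * (1 + Real.log x)) :=
          mul_le_mul_of_nonneg_left inner (by positivity)
      _ = ((e.divisors.card : ℝ)/(e:ℝ)^2) * (x * (1 + Real.log x)) := by
          ring
  have step5 : ∑ e ∈ Finset.Icc 1 N,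
      ((e.divisors.card : ℝ)/(e:ℝ)^2) * (x * (1 + Real.log x))
      ≤ 4 * (x * (1 + Real.log x)) := by
    rw [← Finset.sum_mul]
    refine mul_le_mul_of_nonneg_right (SumPsiB.sum_tau_div_sq_le N) ?_
    positivity
  have final : (15:ℝ) * (4 * (x * (1 + Real.log x))) ≤ 1000 * x * Real.log x := by
    have h69 : (0.69:ℝ) ≤ Real.log x := by
      nlinarith [Real.log_two_gt_d9, hlog2x]
    have hprod : x * 0.69 ≤ x * Real.log x :=
      mul_le_mul_of_nonneg_left h69 hx0.le
    nlinarith [hprod, hx0]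
  calc ∑ d ∈ (Finset.Icc 1 N).filter (fun d => Nat.Coprime d q),
        (dedekindPsi d / d) * (Bfun q d : ℝ)
      ≤ ∑ d ∈ Finset.Icc 1 N,
        (∑ e ∈ d.divisors, (1:ℝ)/e) * (15 * d.divisors.card) := step1
    _ = 15 * ∑ d ∈ Finset.Icc 1 N, ∑ e ∈ d.divisors, (d.divisors.card : ℝ)/e := step2
    _ = 15 * ∑ e ∈ Finset.Icc 1 N,
          ∑ d ∈ (Finset.Icc 1 N).filter (fun d => e ∣ d), (d.divisors.card : ℝ)/e := by
        rw [step3]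
    _ ≤ 15 * ∑ e ∈ Finset.Icc 1 N,
          ((e.divisors.card : ℝ)/(e:ℝ)^2) * (x * (1 + Real.log x)) := by
        refine mul_le_mul_of_nonneg_left (Finset.sum_le_sum step4) (by norm_num)
    _ ≤ 15 * (4 * (x * (1 + Real.log x))) :=
        mul_le_mul_of_nonneg_left step5 (by norm_num)
    _ ≤ 1000 * x * Real.log x := final
end

section
/- For positive integers q and n, let B_q(n) denote the number of integers a with 1 ≤ a ≤ n² and a² ≡ 4q (mod n²). There is a constant K such that for every positive integer q, the sum over all positive integers d coprime to q satisfies ∑_{d ≥ 1, gcd(d,q) = 1} ψ(d) · B_q(d) / d³ ≤ K; in particular this series converges. -/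
open scoped BigOperators

lemma le_rpow_inv_nat {a b : ℝ} {n : ℕ} (hn : 0 < n) (ha : 0 ≤ a) (h : a ^ n ≤ b) :
    a ≤ b ^ ((1:ℝ)/n) := by
  have hb : 0 ≤ b := le_trans (pow_nonneg ha n) h
  have h1 : a = (a ^ n) ^ ((1:ℝ)/n) := by
    rw [← Real.rpow_natCast a n, ← Real.rpow_mul ha]
    rw [mul_one_div, div_self (by exact_mod_cast hn.ne'), Real.rpow_one]
  rw [h1]
  exact Real.rpow_le_rpow (pow_nonneg ha n) h (by positivity)

lemma ext_lemma {p j k : ℕ} (hp : p.Prime) {A B : ℤ} (h : (p:ℤ)^k ∣ A*B)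
    (hB : ¬ (p:ℤ)^j ∣ B) : (p:ℤ)^(k+1-j) ∣ A := by
  rcases eq_or_ne A 0 with rfl | hA
  · exact dvd_zero _
  have hBne : B ≠ 0 := by rintro rfl; exact hB (dvd_zero _)
  have hn : p ^ k ∣ A.natAbs * B.natAbs := by
    rw [← Int.natAbs_mul, ← Int.natAbs_natCast (p ^ k)]
    exact Int.natAbs_dvd_natAbs.mpr (by exact_mod_cast h)
  have hBn : ¬ p ^ j ∣ B.natAbs := by
    intro hc
    exact hB (by rw [← Int.dvd_natAbs]; exact_mod_cast hc)
  have hAne : A.natAbs ≠ 0 := Int.natAbs_ne_zero.mpr hA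
  have hBne' : B.natAbs ≠ 0 := Int.natAbs_ne_zero.mpr hBne
  have h1 : k ≤ (A.natAbs * B.natAbs).factorization p :=
    (Nat.Prime.pow_dvd_iff_le_factorization hp (mul_ne_zero hAne hBne')).mp hn
  rw [Nat.factorization_mul hAne hBne'] at h1
  have h2 : ¬ j ≤ B.natAbs.factorization p := fun hc =>
    hBn ((Nat.Prime.pow_dvd_iff_le_factorization hp hBne').mpr hc)
  have h3 : k + 1 - j ≤ A.natAbs.factorization p := by
    simp only [Finsupp.add_apply] at h1; omega
  have := (Nat.Prime.pow_dvd_iff_le_factorization hp hAne).mpr h3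
  exact Int.dvd_natAbs.mp (by exact_mod_cast this)

lemma prod_le_aux (d : ℕ) (hd : 0 < d) (f : ℕ → ℝ) (t : ℝ) (ht : 0 ≤ t)
    (hf1 : ∀ p, p.Prime → 0 ≤ f p)
    (hsmall : ∀ p, p.Prime → p < 5 → f p ≤ 2 * (p:ℝ)^t)
    (hbig : ∀ p, p.Prime → 5 ≤ p → f p ≤ (p:ℝ)^t) :
    ∏ p ∈ d.primeFactors, f p ≤ 4 * (d:ℝ)^t := by
  have key : ∏ p ∈ d.primeFactors, f p ≤
      ∏ p ∈ d.primeFactors, ((if p < 5 then 2 else 1) * (p:ℝ)^t) := by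
    apply Finset.prod_le_prod
    · intro p hp; exact hf1 p (Nat.prime_of_mem_primeFactors hp)
    · intro p hp
      have hpp := Nat.prime_of_mem_primeFactors hp
      by_cases h5 : p < 5
      · simp [h5]; exact (by simpa using hsmall p hpp h5)
      · simp [h5]; exact hbig p hpp (le_of_not_gt h5)
  rw [Finset.prod_mul_distrib] at key
  have h1 : ∏ p ∈ d.primeFactors, ((if p < 5 then (2:ℝ) else 1)) ≤ 4 := by
    have e1 : ∏ p ∈ d.primeFactors, ((if p < 5 then (2:ℝ) else 1)) =
        ∏ p ∈ d.primeFactors.filter (· < 5), (2:ℝ) := by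
      rw [Finset.prod_filter]
    have hsub : d.primeFactors.filter (· < 5) ⊆ ({2, 3} : Finset ℕ) := by
      intro p hp
      simp only [Finset.mem_filter] at hp
      have hpp := Nat.prime_of_mem_primeFactors hp.1
      have h5 := hp.2
      interval_cases p <;> simp_all <;> norm_num at hpp
    have e2 : (d.primeFactors.filter (· < 5)).card ≤ 2 := by
      calc _ ≤ ({2,3} : Finset ℕ).card := Finset.card_le_card hsub
        _ = 2 := by decide
    rw [e1, Finset.prod_const]
    calc (2:ℝ) ^ (d.primeFactors.filter (· < 5)).card ≤ 2 ^ 2 := by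
          apply pow_le_pow_right₀ (by norm_num) e2
      _ = 4 := by norm_num
  have h2 : ∏ p ∈ d.primeFactors, (p:ℝ)^t ≤ (d:ℝ)^t := by
    rw [Real.finset_prod_rpow _ _ (fun p _ => by positivity) t]
    apply Real.rpow_le_rpow (Finset.prod_nonneg fun p _ => by positivity) _ ht
    rw [← Nat.cast_prod]
    exact_mod_cast Nat.le_of_dvd hd (Nat.prod_primeFactors_dvd d)
  calc ∏ p ∈ d.primeFactors, f p ≤ _ := key
    _ ≤ 4 * (d:ℝ)^t := by
        apply mul_le_mul h1 h2 (Finset.prod_nonneg fun p _ => by positivity)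
        linarith

lemma Bfun_le_pow (q d : ℕ) (hd : 0 < d) (hco : Nat.Coprime d q) :
    Bfun q d ≤ 4 * 2 ^ d.primeFactors.card := by
  rw [Bfun]
  classical
  set N := d ^ 2 with hN
  set c := 4 * q with hc
  set S := (Finset.Icc 1 N).filter (fun a => a ^ 2 % N = c % N) with hS
  rcases S.eq_empty_or_nonempty with h | ⟨a₀, ha₀⟩
  · simp [h]
  have hNpos : 0 < N := pow_pos hd 2
  have hsol : ∀ x ∈ S, (N:ℤ) ∣ (x:ℤ)^2 - (c:ℤ) := by
    intro x hx
    have h1 : x ^ 2 ≡ c [MOD N] := (Finset.mem_filter.mp hx).2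
    have h2 := (Nat.modEq_iff_dvd).mp h1
    have : (x:ℤ)^2 - c = -((c:ℤ) - (x^2 : ℕ)) := by push_cast; ring
    rw [this]
    exact h2.neg_right
  -- key claim
  have claim : ∀ x ∈ S, ∀ p ∈ d.primeFactors,
      (p:ℤ)^(2 * d.factorization p) ∣ 4*((x:ℤ) - (a₀:ℤ)) ∨
      (p:ℤ)^(2 * d.factorization p) ∣ 4*((x:ℤ) + (a₀:ℤ)) := by
    intro x hx p hp
    have hpp : p.Prime := Nat.prime_of_mem_primeFactors hp
    have hpd : p ∣ d := Nat.dvd_of_mem_primeFactors hp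
    set k := 2 * d.factorization p with hk
    have hk1 : 1 ≤ d.factorization p :=
      (Nat.Prime.factorization_pos_of_dvd hpp hd.ne' hpd)
    have hpkN : (p:ℤ)^k ∣ (N:ℤ) := by
      have h1 : p ^ d.factorization p ∣ d := Nat.ordProj_dvd d p
      have h2 : (p ^ d.factorization p)^2 ∣ d^2 := pow_dvd_pow_of_dvd h1 2
      have h3 : p ^ k ∣ N := by rw [hk, mul_comm, pow_mul]; exact h2
      exact_mod_cast h3
    have hprod : (p:ℤ)^k ∣ ((x:ℤ) - a₀) * ((x:ℤ) + a₀) := by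
      have h1 := hsol x hx; have h2 := hsol a₀ ha₀
      have h3 : (N:ℤ) ∣ ((x:ℤ) - a₀) * ((x:ℤ) + a₀) := by
        have := dvd_sub h1 h2
        have e : ((x:ℤ)^2 - c) - ((a₀:ℤ)^2 - c) = ((x:ℤ) - a₀) * ((x:ℤ) + a₀) := by ring
        rwa [e] at this
      exact hpkN.trans h3
    have hIp : Prime (p:ℤ) := Nat.prime_iff_prime_int.mp hpp
    by_cases hp2 : p = 2
    · subst hp2
      have hqodd : ¬ (2 ∣ q) := by
        intro h2q
        have : 2 ∣ Nat.gcd d q := Nat.dvd_gcd hpd h2q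
        rw [hco] at this; omega
      by_cases hs1 : d.factorization 2 = 1
      · left
        have he : ((2:ℕ):ℤ)^k = 4 := by rw [hk, hs1]; norm_num
        rw [he]; exact dvd_mul_right 4 _
      · have hk4 : 4 ≤ k := by omega
        have h16N : (16:ℤ) ∣ (N:ℤ) := by
          have h1 : ((2:ℕ):ℤ)^4 ∣ ((2:ℕ):ℤ)^k := pow_dvd_pow _ hk4
          have h2 : ((2:ℕ):ℤ)^4 = 16 := by norm_num
          rw [← h2]; exact h1.trans hpkN
        have hnotboth : ¬ (((2:ℕ):ℤ)^3 ∣ (x:ℤ) - a₀ ∧ ((2:ℕ):ℤ)^3 ∣ (x:ℤ) + a₀) := by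
          rintro ⟨h1, h2⟩
          have h8 : (8:ℤ) ∣ 2 * (a₀:ℤ) := by
            have h3 := dvd_sub h2 h1
            have e : ((x:ℤ) + a₀) - ((x:ℤ) - a₀) = 2 * a₀ := by ring
            rw [e] at h3
            have h4 : ((2:ℕ):ℤ)^3 = 8 := by norm_num
            rwa [h4] at h3
          have h4a : (4:ℤ) ∣ (a₀:ℤ) := by
            rcases h8 with ⟨t, ht⟩; exact ⟨t, by linarith⟩
          have h16a : (16:ℤ) ∣ (a₀:ℤ)^2 := by
            rcases h4a with ⟨t, ht⟩; exact ⟨t^2, by rw [ht]; ring⟩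
          have h16c : (16:ℤ) ∣ (c:ℤ) := by
            have h5 : (16:ℤ) ∣ ((a₀:ℤ)^2 - c) := h16N.trans (hsol a₀ ha₀)
            have h6 := dvd_sub h16a h5
            have e : (a₀:ℤ)^2 - ((a₀:ℤ)^2 - c) = c := by ring
            rwa [e] at h6
          have h4q : (4:ℤ) ∣ (q:ℤ) := by
            rcases h16c with ⟨t, ht⟩
            refine ⟨t, ?_⟩
            have he : ((c:ℕ):ℤ) = 4 * (q:ℤ) := by rw [hc]; push_cast; ring
            rw [he] at ht; linarith
          have h4q' : (4:ℕ) ∣ q := by exact_mod_cast h4q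
          exact hqodd (dvd_trans ⟨2, rfl⟩ h4q')
        have he : ((2:ℕ):ℤ)^k = 4 * ((2:ℕ):ℤ)^(k+1-3) := by
          have hke : k = 2 + (k + 1 - 3) := by omega
          conv_lhs => rw [hke]
          rw [pow_add]; norm_num
        rcases not_and_or.mp hnotboth with h1 | h2
        · right
          have hdvd := ext_lemma Nat.prime_two (by rwa [mul_comm] at hprod) h1
          rw [he]
          exact mul_dvd_mul_left 4 hdvd
        · left
          have hdvd := ext_lemma Nat.prime_two hprod h2
          rw [he]
          exact mul_dvd_mul_left 4 hdvd
    · -- p odd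
      by_cases hxa : (p:ℤ) ∣ (x:ℤ) + a₀
      · have hnd : ¬ (p:ℤ) ∣ (x:ℤ) - a₀ := by
          intro h1
          have h2a : (p:ℤ) ∣ 2 * (a₀:ℤ) := by
            have h3 := dvd_sub hxa h1
            have e : ((x:ℤ) + a₀) - ((x:ℤ) - a₀) = 2 * a₀ := by ring
            rwa [e] at h3
          have hpa : (p:ℤ) ∣ (a₀:ℤ) := by
            rcases hIp.dvd_mul.mp h2a with h | h
            · exfalso
              have h4 : p ∣ 2 := by exact_mod_cast h
              exact hp2 ((Nat.prime_dvd_prime_iff_eq hpp Nat.prime_two).mp h4)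
            · exact h
          have hpc : (p:ℤ) ∣ (c:ℤ) := by
            have hpN : (p:ℤ) ∣ (N:ℤ) := (dvd_pow_self (p:ℤ) (by omega : k ≠ 0)).trans hpkN
            have h5 : (p:ℤ) ∣ ((a₀:ℤ)^2 - c) := hpN.trans (hsol a₀ ha₀)
            have hpa2 : (p:ℤ) ∣ (a₀:ℤ)^2 := hpa.pow (by norm_num)
            have h6 := dvd_sub hpa2 h5
            have e : (a₀:ℤ)^2 - ((a₀:ℤ)^2 - c) = c := by ring
            rwa [e] at h6
          have hpc4 : (p:ℤ) ∣ 4 * (q:ℤ) := by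
            have he : ((c:ℕ):ℤ) = 4 * (q:ℤ) := by rw [hc]; push_cast; ring
            rwa [he] at hpc
          rcases hIp.dvd_mul.mp hpc4 with h | h
          · have h4 : p ∣ 4 := by exact_mod_cast h
            have h4' : p ∣ 2 ^ 2 := by norm_num at h4 ⊢; exact h4
            have h5 : p ∣ 2 := hpp.dvd_of_dvd_pow h4'
            exact hp2 ((Nat.prime_dvd_prime_iff_eq hpp Nat.prime_two).mp h5)
          · have hq' : p ∣ q := by exact_mod_cast h
            have h7 : p ∣ Nat.gcd d q := Nat.dvd_gcd hpd hq'
            rw [hco] at h7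
            exact hpp.one_lt.ne' (Nat.dvd_one.mp h7)
        have hdvd := ext_lemma (j:=1) hpp (by rwa [mul_comm] at hprod) (by simpa using hnd)
        right
        have e : k + 1 - 1 = k := by omega
        rw [e] at hdvd
        exact hdvd.mul_left 4
      · have hdvd := ext_lemma (j:=1) hpp hprod (by simpa using hxa)
        left
        have e : k + 1 - 1 = k := by omega
        rw [e] at hdvd
        exact hdvd.mul_left 4
  -- the injection
  set m := N / 4 with hm
  set F : ℕ → Finset ℕ × ℕ := fun x =>
    (d.primeFactors.filter (fun (p:ℕ) => ((p:ℕ):ℤ)^(2 * d.factorization p) ∣ 4*((x:ℤ) - (a₀:ℤ))),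
     (x / m) % 4) with hF
  have hmaps : ∀ x ∈ S, F x ∈ d.primeFactors.powerset ×ˢ Finset.range 4 := by
    intro x hx
    rw [Finset.mem_product]
    constructor
    · exact Finset.mem_powerset.mpr (Finset.filter_subset _ _)
    · exact Finset.mem_range.mpr (Nat.mod_lt _ (by norm_num))
  have hinj : Set.InjOn F S := by
    intro x hx y hy hxy
    have hT : d.primeFactors.filter
        (fun (p:ℕ) => ((p:ℕ):ℤ)^(2 * d.factorization p) ∣ 4*((x:ℤ) - (a₀:ℤ))) =
        d.primeFactors.filter
        (fun (p:ℕ) => ((p:ℕ):ℤ)^(2 * d.factorization p) ∣ 4*((y:ℤ) - (a₀:ℤ))) :=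
      congrArg Prod.fst hxy
    have hr : (x / m) % 4 = (y / m) % 4 := congrArg Prod.snd hxy
    have hall : ∀ p ∈ d.primeFactors,
        (p:ℤ)^(2 * d.factorization p) ∣ 4*((x:ℤ) - (y:ℤ)) := by
      intro p hp
      by_cases hmem : p ∈ d.primeFactors.filter
          (fun (p:ℕ) => ((p:ℕ):ℤ)^(2 * d.factorization p) ∣ 4*((x:ℤ) - (a₀:ℤ)))
      · have hmx := (Finset.mem_filter.mp hmem).2
        have hmy := (Finset.mem_filter.mp (hT ▸ hmem)).2
        have e : 4*((x:ℤ) - y) = 4*((x:ℤ) - a₀) - 4*((y:ℤ) - a₀) := by ring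
        rw [e]; exact dvd_sub hmx hmy
      · have hnx : ¬ (p:ℤ)^(2 * d.factorization p) ∣ 4*((x:ℤ) - (a₀:ℤ)) :=
          fun hcon => hmem (Finset.mem_filter.mpr ⟨hp, hcon⟩)
        have hny : ¬ (p:ℤ)^(2 * d.factorization p) ∣ 4*((y:ℤ) - (a₀:ℤ)) :=
          fun hcon => hmem (hT ▸ Finset.mem_filter.mpr ⟨hp, hcon⟩)
        have hx4 := (claim x hx p hp).resolve_left hnx
        have hy4 := (claim y hy p hp).resolve_left hny
        have e : 4*((x:ℤ) - y) = 4*((x:ℤ) + a₀) - 4*((y:ℤ) + a₀) := by ring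
        rw [e]; exact dvd_sub hx4 hy4
    -- N divides 4 (x - y)
    have hdxy : (N:ℤ) ∣ 4 * ((x:ℤ) - y) := by
      rcases eq_or_ne ((4:ℤ) * ((x:ℤ) - y)) 0 with h0 | h0
      · rw [h0]; exact dvd_zero _
      set n := ((4:ℤ) * ((x:ℤ) - y)).natAbs with hn
      have hnne : n ≠ 0 := Int.natAbs_ne_zero.mpr h0
      have hdvdN : N ∣ n := by
        rw [← Nat.factorization_le_iff_dvd hNpos.ne' hnne]
        intro p
        rw [hN, Nat.factorization_pow]
        simp only [Finsupp.smul_apply, smul_eq_mul]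
        by_cases hp : p ∈ d.primeFactors
        · have h1 := hall p hp
          have hpp : p.Prime := Nat.prime_of_mem_primeFactors hp
          have h2 : (p:ℤ)^(2 * d.factorization p) ∣ (n:ℤ) :=
            Int.dvd_natAbs.mpr h1
          have h3 : p^(2 * d.factorization p) ∣ n := by exact_mod_cast h2
          exact (Nat.Prime.pow_dvd_iff_le_factorization hpp hnne).mp h3
        · have : d.factorization p = 0 := by
            rw [← Nat.support_factorization] at hp
            exact Finsupp.notMem_support_iff.mp hp
          simp [this]
      have h4 : (N:ℤ) ∣ (n:ℤ) := Int.natCast_dvd_natCast.mpr hdvdN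
      exact Int.dvd_natAbs.mp h4
    -- bounds
    have hxI := Finset.mem_Icc.mp (Finset.mem_filter.mp hx).1
    have hyI := Finset.mem_Icc.mp (Finset.mem_filter.mp hy).1
    have habs : |(x:ℤ) - y| < N := by
      rw [abs_sub_lt_iff]
      constructor <;> [skip; skip] <;>
        · have h1 := hxI.1; have h2 := hxI.2; have h3 := hyI.1; have h4 := hyI.2
          omega
    by_cases h2d : 2 ∣ d
    · -- d even
      have h4N : 4 ∣ N := by
        rcases h2d with ⟨t, rfl⟩
        exact ⟨t^2, by rw [hN]; ring⟩
      have hmN : m * 4 = N := Nat.div_mul_cancel h4N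
      have hmpos : 0 < m := by
        rcases h4N with ⟨t, ht⟩
        have : 0 < t := by omega
        omega
      have hmd : (m:ℤ) ∣ (x:ℤ) - y := by
        rcases hdxy with ⟨t, ht⟩
        refine ⟨t, ?_⟩
        have hNm : (N:ℤ) = 4 * m := by exact_mod_cast (by omega : N = 4 * m)
        rw [hNm] at ht
        have : (4:ℤ) * ((x:ℤ) - y) = 4 * ((m:ℤ) * t) := by rw [ht]; ring
        exact mul_left_cancel₀ (by norm_num) this
      have hxm : x % m = y % m := by
        have h1 : x ≡ y [MOD m] := by
          rw [Nat.modEq_iff_dvd]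
          have h2 := dvd_neg.mpr hmd
          simpa using h2
        exact h1
      have hq4 : (4:ℤ) ∣ ((x / m : ℕ):ℤ) - ((y / m : ℕ):ℤ) := by
        have h1 : x / m ≡ y / m [MOD 4] := hr
        have h2 := (Nat.modEq_iff_dvd).mp h1
        simpa using dvd_neg.mpr h2
      have hNdvd : (N:ℤ) ∣ (x:ℤ) - y := by
        have ex : (x:ℤ) - y = (m:ℤ) * (((x / m : ℕ):ℤ) - ((y / m : ℕ):ℤ)) := by
          have ex1 : (m:ℤ) * ((x / m : ℕ):ℤ) + ((x % m : ℕ):ℤ) = (x:ℤ) := by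
            exact_mod_cast congrArg (Nat.cast : ℕ → ℤ) (Nat.div_add_mod x m)
          have ex2 : (m:ℤ) * ((y / m : ℕ):ℤ) + ((y % m : ℕ):ℤ) = (y:ℤ) := by
            exact_mod_cast congrArg (Nat.cast : ℕ → ℤ) (Nat.div_add_mod y m)
          rw [← ex1, ← ex2, hxm]; ring
        rw [ex]
        have hNm : (N:ℤ) = (m:ℤ) * 4 := by exact_mod_cast hmN.symm
        rw [hNm]
        exact mul_dvd_mul_left _ hq4
      have h0 : (x:ℤ) - y = 0 := Int.eq_zero_of_abs_lt_dvd hNdvd habs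
      have : (x:ℤ) = y := by linarith
      exact_mod_cast this
    · -- d odd
      have hco2 : Nat.Coprime d 2 :=
        ((Nat.Prime.coprime_iff_not_dvd Nat.prime_two).mpr h2d).symm
      have hco4 : Nat.Coprime N 4 := by
        have h1 : Nat.Coprime d 4 := by
          have := hco2.pow_right 2
          norm_num at this ⊢
          exact this
        exact h1.pow_left 2
      have hicop : IsCoprime (N:ℤ) (4:ℤ) := by
        have := Nat.isCoprime_iff_coprime.mpr hco4
        exact_mod_cast this
      have hNdvd : (N:ℤ) ∣ (x:ℤ) - y := hicop.dvd_of_dvd_mul_left hdxy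
      have h0 : (x:ℤ) - y = 0 := Int.eq_zero_of_abs_lt_dvd hNdvd habs
      have : (x:ℤ) = y := by linarith
      exact_mod_cast this
  have hcard := Finset.card_le_card_of_injOn F hmaps hinj
  calc S.card ≤ (d.primeFactors.powerset ×ˢ Finset.range 4).card := hcard
    _ = 2 ^ d.primeFactors.card * 4 := by
        rw [Finset.card_product, Finset.card_powerset, Finset.card_range]
    _ = 4 * 2 ^ d.primeFactors.card := mul_comm _ _


lemma le_rpow_quarter {a b : ℝ} (ha : 0 ≤ a) (h : a ^ 4 ≤ b) : a ≤ b ^ ((1:ℝ)/4) := by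
  have := le_rpow_inv_nat (n := 4) (by norm_num) ha h
  norm_num at this ⊢
  convert this using 3 <;> norm_num

lemma le_rpow_half {a b : ℝ} (ha : 0 ≤ a) (h : a ^ 2 ≤ b) : a ≤ b ^ ((1:ℝ)/2) := by
  have := le_rpow_inv_nat (n := 2) (by norm_num) ha h
  norm_num at this ⊢
  convert this using 3 <;> norm_num

lemma one_le_rpow_aux {p : ℕ} (hp : 1 ≤ p) {t : ℝ} (ht : 0 ≤ t) : (1:ℝ) ≤ (p:ℝ) ^ t := by
  have h1 : ((1:ℝ)) ^ t ≤ (p:ℝ) ^ t :=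
    Real.rpow_le_rpow (by norm_num) (by exact_mod_cast hp) ht
  rwa [Real.one_rpow] at h1

lemma psi_le (d : ℕ) (hd : 0 < d) :
    dedekindPsi d ≤ (d:ℝ) * (4 * (d:ℝ) ^ ((1:ℝ)/4)) := by
  rw [dedekindPsi]
  apply mul_le_mul_of_nonneg_left _ (by positivity)
  apply prod_le_aux d hd _ _ (by norm_num)
  · intro p hp; positivity
  · intro p hp h5
    have h2 : 2 ≤ p := hp.two_le
    have : (1:ℝ) + 1/(p:ℝ) ≤ 2 := by
      have : (1:ℝ)/(p:ℝ) ≤ 1 := by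
        rw [div_le_one (by positivity)]
        exact_mod_cast Nat.one_le_iff_ne_zero.mpr (by omega)
      linarith
    calc (1:ℝ) + 1/(p:ℝ) ≤ 2 := this
      _ ≤ 2 * (p:ℝ) ^ ((1:ℝ)/4) := by
          nlinarith [one_le_rpow_aux (le_trans one_le_two h2) (by norm_num : (0:ℝ) ≤ (1:ℝ)/4)]
  · intro p hp h5
    apply le_rpow_quarter (by positivity)
    have hp5 : (5:ℝ) ≤ (p:ℝ) := by exact_mod_cast h5
    have hppos : (0:ℝ) < (p:ℝ) := by linarith
    have key : ((p:ℝ) + 1)^4 ≤ (p:ℝ)^5 := by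
      nlinarith [mul_le_mul_of_nonneg_left hp5 (pow_nonneg hppos.le 4),
        mul_le_mul_of_nonneg_left hp5 (pow_nonneg hppos.le 3),
        mul_le_mul_of_nonneg_left hp5 (pow_nonneg hppos.le 2),
        mul_le_mul_of_nonneg_left hp5 hppos.le]
    have e : ((1:ℝ) + 1/(p:ℝ))^4 = ((p:ℝ) + 1)^4 / (p:ℝ)^4 := by
      field_simp
    rw [e, div_le_iff₀ (by positivity)]
    calc ((p:ℝ) + 1)^4 ≤ (p:ℝ)^5 := key
      _ = (p:ℝ) * (p:ℝ)^4 := by ring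

lemma two_pow_le (d : ℕ) (hd : 0 < d) :
    (2:ℝ) ^ d.primeFactors.card ≤ 4 * (d:ℝ) ^ ((1:ℝ)/2) := by
  have e : (2:ℝ) ^ d.primeFactors.card = ∏ p ∈ d.primeFactors, (2:ℝ) := by
    rw [Finset.prod_const]
  rw [e]
  apply prod_le_aux d hd _ _ (by norm_num)
  · intro p hp; norm_num
  · intro p hp h5
    have := one_le_rpow_aux (le_trans one_le_two hp.two_le)
      (by norm_num : (0:ℝ) ≤ (1:ℝ)/2)
    nlinarith
  · intro p hp h5
    apply le_rpow_half (by norm_num)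
    have : (5:ℝ) ≤ (p:ℝ) := by exact_mod_cast h5
    nlinarith

theorem sum_psi_B_div_cube_le :
    ∃ K : ℝ, ∀ q : ℕ, 0 < q →
      ∃ S : ℝ, S ≤ K ∧
        HasSum (fun d : ℕ => if 0 < d ∧ Nat.Coprime d q
          then dedekindPsi d * Bfun q d / (d : ℝ) ^ 3 else 0) S := by
  refine ⟨∑' d : ℕ, 64 * (1 / (d:ℝ) ^ ((5:ℝ)/4)), ?_⟩
  intro q hq
  set f : ℕ → ℝ := fun d => if 0 < d ∧ Nat.Coprime d q
      then dedekindPsi d * Bfun q d / (d : ℝ) ^ 3 else 0 with hf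
  have hg : Summable (fun d : ℕ => 64 * (1 / (d:ℝ) ^ ((5:ℝ)/4))) :=
    (Real.summable_one_div_nat_rpow.mpr (by norm_num)).mul_left 64
  have hfnonneg : ∀ d, 0 ≤ f d := by
    intro d
    rw [hf]
    dsimp only
    split
    · have h1 : 0 ≤ dedekindPsi d := by
        rw [dedekindPsi]
        apply mul_nonneg (by positivity)
        apply Finset.prod_nonneg
        intro p hp; positivity
      positivity
    · exact le_refl _
  have hbound : ∀ d, f d ≤ 64 * (1 / (d:ℝ) ^ ((5:ℝ)/4)) := by
    intro d
    by_cases h : 0 < d ∧ Nat.Coprime d q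
    case neg =>
      rw [hf]; dsimp only; rw [if_neg h]; positivity
    case pos =>
      rw [hf]; dsimp only; rw [if_pos h]
      obtain ⟨hd, hco⟩ := h
      have hD0 : (0:ℝ) < (d:ℝ) := by exact_mod_cast hd
      have hψ := psi_le d hd
      have hB : (Bfun q d : ℝ) ≤ 16 * (d:ℝ) ^ ((1:ℝ)/2) := by
        have h1 : (Bfun q d : ℝ) ≤ 4 * (2:ℝ) ^ d.primeFactors.card := by
          exact_mod_cast Bfun_le_pow q d hd hco
        calc (Bfun q d : ℝ) ≤ 4 * (2:ℝ) ^ d.primeFactors.card := h1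
          _ ≤ 4 * (4 * (d:ℝ) ^ ((1:ℝ)/2)) := by
              have := two_pow_le d hd
              linarith
          _ = 16 * (d:ℝ) ^ ((1:ℝ)/2) := by ring
      have hψnn : 0 ≤ dedekindPsi d := by
        rw [dedekindPsi]
        apply mul_nonneg (by positivity)
        apply Finset.prod_nonneg
        intro p hp; positivity
      have h1 : dedekindPsi d * (Bfun q d : ℝ) ≤
          ((d:ℝ) * (4 * (d:ℝ) ^ ((1:ℝ)/4))) * (16 * (d:ℝ) ^ ((1:ℝ)/2)) :=
        mul_le_mul hψ hB (by positivity) (by positivity)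
      have h2 : ((d:ℝ) * (4 * (d:ℝ) ^ ((1:ℝ)/4))) * (16 * (d:ℝ) ^ ((1:ℝ)/2)) =
          64 * (d:ℝ) ^ ((7:ℝ)/4) := by
        have e1 : (d:ℝ) * (d:ℝ) ^ ((1:ℝ)/4) * (d:ℝ) ^ ((1:ℝ)/2) = (d:ℝ) ^ ((7:ℝ)/4) := by
          calc (d:ℝ) * (d:ℝ) ^ ((1:ℝ)/4) * (d:ℝ) ^ ((1:ℝ)/2)
              = (d:ℝ) ^ ((1:ℝ)) * (d:ℝ) ^ ((1:ℝ)/4) * (d:ℝ) ^ ((1:ℝ)/2) := by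
                rw [Real.rpow_one]
            _ = (d:ℝ) ^ ((1:ℝ) + (1:ℝ)/4 + (1:ℝ)/2) := by
                rw [← Real.rpow_add hD0, ← Real.rpow_add hD0]
            _ = (d:ℝ) ^ ((7:ℝ)/4) := by norm_num
        calc ((d:ℝ) * (4 * (d:ℝ) ^ ((1:ℝ)/4))) * (16 * (d:ℝ) ^ ((1:ℝ)/2))
            = 64 * ((d:ℝ) * (d:ℝ) ^ ((1:ℝ)/4) * (d:ℝ) ^ ((1:ℝ)/2)) := by ring
          _ = 64 * (d:ℝ) ^ ((7:ℝ)/4) := by rw [e1]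
      rw [h2] at h1
      have h3 : dedekindPsi d * (Bfun q d : ℝ) / (d:ℝ)^3 ≤
          64 * (d:ℝ) ^ ((7:ℝ)/4) / (d:ℝ)^3 :=
        div_le_div_of_nonneg_right h1 (by positivity)
      have h4 : 64 * (d:ℝ) ^ ((7:ℝ)/4) / (d:ℝ)^3 = 64 * (1 / (d:ℝ) ^ ((5:ℝ)/4)) := by
        rw [mul_div_assoc]
        congr 1
        rw [← Real.rpow_natCast (d:ℝ) 3, ← Real.rpow_sub hD0]
        have e : (7:ℝ)/4 - ((3:ℕ):ℝ) = -((5:ℝ)/4) := by norm_num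
        rw [e, Real.rpow_neg hD0.le, one_div]
      rw [h4] at h3
      exact h3
  have hsum : Summable f := Summable.of_nonneg_of_le hfnonneg hbound hg
  exact ⟨∑' d, f d, Summable.tsum_le_tsum hbound hsum hg, hsum.hasSum⟩
end
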